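/- arXiv:0910.4744 — 7 statements merged into one kernel-verified Lean document; each statement's English description precedes it below -/
import Mathlib

section
/- Let s = a + ib with a > 0 and b real, let k ∈ [0,1), and let c be a complex constant, with M = a·k·|s| + (a−1)·|s+c| if 0 < a ≤ 1 and M = k·|s| if a > 1. Let f ∈ 𝒜 with f'(z) ≠ 0 for all z in 𝔻. If the inequality |c|z|² + s − a(1−|z|²)·[s(1 + z f''(z)/f'(z)) + (1−s)·z f'(z)/f(z)]| ≤ M holds at every z ∈ 𝔻 \ {0} at which f(z) ≠ 0, then in fact f(z) ≠ 0 for every z with 0 < |z| < 1. -/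
open Metric Set Filter Complex
open scoped Topology Real

private lemma case_s_ne_one
    (a : ℝ) (ha : 0 < a) (c s : ℂ) (M : ℝ) (hsne : s ≠ 1)
    (f : ℂ → ℂ) (hf : AnalyticOnNhd ℂ f (ball 0 1))
    (hf' : ∀ z ∈ ball (0 : ℂ) 1, deriv f z ≠ 0)
    (hineq : ∀ z ∈ ball (0 : ℂ) 1 \ {0}, f z ≠ 0 →
      ‖c * (‖z‖ : ℂ) ^ 2 + s
        - (a : ℂ) * (1 - (‖z‖ : ℂ) ^ 2) *
          (s * (1 + z * deriv (deriv f) z / deriv f z)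
            + (1 - s) * (z * deriv f z / f z))‖ ≤ M)
    (z₁ : ℂ) (hz₁b : z₁ ∈ ball (0:ℂ) 1) (hz₁0 : z₁ ≠ 0) (hfz₁ : f z₁ = 0) : False := by
  have hz₁abs : ‖z₁‖ < 1 := by
    rwa [mem_ball_zero_iff] at hz₁b
  have hfan : AnalyticAt ℂ f z₁ := hf z₁ hz₁b
  have hd1 : deriv f z₁ ≠ 0 := hf' z₁ hz₁b
  set g : ℂ → ℂ := dslope f z₁ with hg
  have hgat : ContinuousAt g z₁ := continuousAt_dslope_same.2 hfan.differentiableAt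
  have hg1 : g z₁ = deriv f z₁ := dslope_same f z₁
  have hg1ne : g z₁ ≠ 0 := by rw [hg1]; exact hd1
  have hfac : ∀ z, f z = (z - z₁) * g z := by
    intro z
    have hsm : (z - z₁) • g z = f z - f z₁ := sub_smul_dslope f z₁ z
    rw [hfz₁, sub_zero] at hsm
    rw [← hsm, smul_eq_mul]
  -- continuity setup
  have hf'an : AnalyticAt ℂ (deriv f) z₁ := hf.deriv z₁ hz₁b
  have hf''an : AnalyticAt ℂ (deriv (deriv f)) z₁ := hf.deriv.deriv z₁ hz₁b
  have hXcont : ContinuousAt (fun z => ((‖z‖ : ℝ) : ℂ) ^ 2) z₁ :=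
    ((Complex.continuous_ofReal.comp continuous_norm).pow 2).continuousAt
  set ψ : ℂ → ℂ := fun z => c * (‖z‖ : ℂ) ^ 2 + s
      - (a : ℂ) * (1 - (‖z‖ : ℂ) ^ 2) *
        (s * (1 + z * deriv (deriv f) z / deriv f z)) with hψdef
  set φ : ℂ → ℂ := fun z => (a : ℂ) * (1 - (‖z‖ : ℂ) ^ 2) *
        ((1 - s) * (z * deriv f z / g z)) with hφdef
  have hψcont : ContinuousAt ψ z₁ := by
    apply ContinuousAt.sub
    · exact (hXcont.const_mul c).add continuousAt_const
    · exact (continuousAt_const.mul (continuousAt_const.sub hXcont)).mul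
        (continuousAt_const.mul (continuousAt_const.add
          ((continuousAt_id.mul hf''an.continuousAt).div hf'an.continuousAt hd1)))
  have hφcont : ContinuousAt φ z₁ := by
    exact (continuousAt_const.mul (continuousAt_const.sub hXcont)).mul
      (continuousAt_const.mul
        ((continuousAt_id.mul hf'an.continuousAt).div hgat hg1ne))
  -- the limit value of φ
  have hX₁ne : (1 : ℂ) - (‖z₁‖ : ℂ) ^ 2 ≠ 0 := by
    have : ((1 - ‖z₁‖ ^ 2 : ℝ) : ℂ) ≠ 0 := by
      rw [Complex.ofReal_ne_zero]
      nlinarith [norm_nonneg z₁]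
    convert this using 1
    push_cast
    ring
  have hφ₁ : φ z₁ = (a : ℂ) * (1 - (‖z₁‖ : ℂ) ^ 2) * ((1 - s) * z₁) := by
    rw [hφdef]
    simp only
    rw [hg1, mul_div_assoc, div_self hd1, mul_one]
  have hφ₁ne : φ z₁ ≠ 0 := by
    rw [hφ₁]
    refine mul_ne_zero (mul_ne_zero ?_ hX₁ne) (mul_ne_zero (sub_ne_zero.2 (Ne.symm hsne)) hz₁0)
    exact_mod_cast ne_of_gt ha
  set Lv : ℝ := ‖φ z₁‖ with hLv
  have hLvpos : 0 < Lv := by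
    rw [hLv]
    exact (norm_pos_iff.mpr hφ₁ne)
  set Kψ : ℝ := ‖ψ z₁‖ + 1 with hKψ
  -- eventualities
  have e_ball : ∀ᶠ z in 𝓝[≠] z₁, z ∈ ball (0:ℂ) 1 :=
    eventually_nhdsWithin_of_eventually_nhds (isOpen_ball.mem_nhds hz₁b)
  have e_ne0 : ∀ᶠ z in 𝓝[≠] z₁, z ≠ 0 :=
    eventually_nhdsWithin_of_eventually_nhds
      (isOpen_compl_singleton.mem_nhds (by simpa using hz₁0))
  have e_nez₁ : ∀ᶠ z in 𝓝[≠] z₁, z ≠ z₁ := self_mem_nhdsWithin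
  have e_g : ∀ᶠ z in 𝓝[≠] z₁, g z ≠ 0 :=
    eventually_nhdsWithin_of_eventually_nhds (hgat.eventually_ne hg1ne)
  have e_f : ∀ᶠ z in 𝓝[≠] z₁, f z ≠ 0 := by
    filter_upwards [e_nez₁, e_g] with z h1 h2
    rw [hfac z]
    exact mul_ne_zero (sub_ne_zero.2 h1) h2
  have e_ψ : ∀ᶠ z in 𝓝[≠] z₁, ‖ψ z‖ < Kψ := by
    refine ((continuous_norm.continuousAt.comp hψcont).mono_left
      nhdsWithin_le_nhds).eventually_lt_const ?_
    show ‖ψ z₁‖ < Kψ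
    rw [hKψ]; linarith
  have e_φ : ∀ᶠ z in 𝓝[≠] z₁, Lv / 2 < ‖φ z‖ := by
    refine ((continuous_norm.continuousAt.comp hφcont).mono_left
      nhdsWithin_le_nhds).eventually_const_lt ?_
    show Lv / 2 < ‖φ z₁‖
    rw [← hLv]; exact half_lt_self hLvpos
  -- key equality
  have keyeq : ∀ z, z ∈ ball (0:ℂ) 1 → z ≠ z₁ → g z ≠ 0 →
      c * (‖z‖ : ℂ) ^ 2 + s
        - (a : ℂ) * (1 - (‖z‖ : ℂ) ^ 2) *
          (s * (1 + z * deriv (deriv f) z / deriv f z)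
            + (1 - s) * (z * deriv f z / f z)) = ψ z - φ z / (z - z₁) := by
    intro z hzb hzz₁ hgz
    rw [hψdef, hφdef]
    simp only
    rw [hfac z]
    have h1 : z - z₁ ≠ 0 := sub_ne_zero.2 hzz₁
    field_simp
    ring
  -- M ≥ 0
  have hM0 : 0 ≤ M := by
    obtain ⟨z, hzb, hzne0, hzf⟩ := (e_ball.and (e_ne0.and e_f)).exists
    exact le_trans (norm_nonneg _) (hineq z ⟨hzb, hzne0⟩ hzf)
  have hKψpos : 0 < Kψ := by positivity
  set ε : ℝ := (Lv / 2) / (Kψ + M + 1) with hε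
  have hεpos : 0 < ε := by positivity
  have e_close : ∀ᶠ z in 𝓝[≠] z₁, ‖z - z₁‖ < ε := by
    refine eventually_nhdsWithin_of_eventually_nhds ?_
    have := Metric.ball_mem_nhds z₁ hεpos
    filter_upwards [this] with z hz
    rwa [mem_ball, Complex.dist_eq] at hz
  -- combine
  obtain ⟨z, hzb, hz0, hzz₁, hgz, hfz, hψz, hφz, hcl⟩ :=
    (e_ball.and (e_ne0.and (e_nez₁.and (e_g.and (e_f.and (e_ψ.and (e_φ.and e_close))))))).exists
  have hineqz := hineq z ⟨hzb, hz0⟩ hfz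
  rw [keyeq z hzb hzz₁ hgz] at hineqz
  have h1 : ‖φ z / (z - z₁)‖ ≤ Kψ + M := by
    have : φ z / (z - z₁) = ψ z - (ψ z - φ z / (z - z₁)) := by ring
    rw [this]
    refine le_trans (norm_sub_le _ _) ?_
    have := hψz.le
    linarith [hineqz]
  have h2 : Kψ + M + 1 ≤ ‖φ z / (z - z₁)‖ := by
    rw [norm_div]
    have hzz₁' : 0 < ‖z - z₁‖ := norm_pos_iff.mpr (sub_ne_zero.2 hzz₁)
    have : (Lv / 2) / ε ≤ (Lv / 2) / ‖z - z₁‖ := by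
      apply div_le_div_of_nonneg_left (by linarith) hzz₁' hcl.le
    have hεval : (Lv / 2) / ε = Kψ + M + 1 := by
      rw [hε]
      field_simp
    rw [hεval] at this
    refine le_trans this ?_
    gcongr
  linarith

private lemma re_div_gt_one {A : ℝ} {ζ : ℂ} (hA : 0 < A)
    (h : ‖ζ - (A : ℂ)‖ < A) : 1 < (((2 * A : ℝ) : ℂ) / ζ).re := by
  set p := ζ.re
  set q := ζ.im
  have hsq : ‖ζ - (A : ℂ)‖ ^ 2 < A ^ 2 := by
    have := norm_nonneg (ζ - (A : ℂ))
    nlinarith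
  have hnsq : Complex.normSq (ζ - (A : ℂ)) = (p - A) ^ 2 + q ^ 2 := by
    simp [Complex.normSq_apply, p, q]; ring
  rw [← Complex.sq_norm] at hnsq
  have hkey : p ^ 2 + q ^ 2 < 2 * A * p := by nlinarith [hsq, hnsq]
  have hppos : 0 < p := by nlinarith
  have hnpos : 0 < p ^ 2 + q ^ 2 := by nlinarith
  have hre : (((2 * A : ℝ) : ℂ) / ζ).re = 2 * A * p / (p ^ 2 + q ^ 2) := by
    rw [Complex.div_re]
    simp [Complex.normSq_apply, p, q]
    ring
  rw [hre, lt_div_iff₀ hnpos]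
  linarith

private lemma slope_dec {g : ℝ → ℝ} {t₀ d : ℝ}
    (hg : HasDerivAt g d t₀) (hd : d < 0) :
    ∀ᶠ t in 𝓝[>] t₀, g t < g t₀ := by
  have hslope : Tendsto (slope g t₀) (𝓝[≠] t₀) (𝓝 d) :=
    hasDerivAt_iff_tendsto_slope.1 hg
  have h1 : ∀ᶠ t in 𝓝[≠] t₀, slope g t₀ t < 0 := hslope.eventually_lt_const hd
  have h2 : ∀ᶠ t in 𝓝[>] t₀, slope g t₀ t < 0 :=
    h1.filter_mono (nhdsWithin_mono _ fun x hx => ne_of_gt hx)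
  filter_upwards [h2, self_mem_nhdsWithin] with t ht ht'
  have htpos : (0:ℝ) < t - t₀ := sub_pos.2 ht'
  rw [slope_def_field] at ht
  have := (div_neg_iff).1 ht
  rcases this with ⟨h, h'⟩ | ⟨h, h'⟩
  · linarith
  · linarith

private lemma cprime_bound {k : ℝ} {c' : ℂ} {h : ℂ → ℂ}
    (hh : ∀ z ∈ ball (0:ℂ) 1, DifferentiableAt ℂ h z) (hh0 : h 0 = 0)
    (hb : ∀ z ∈ ball (0:ℂ) 1,
      ‖c' * (‖z‖ : ℂ) ^ 2 - (1 - (‖z‖ : ℂ) ^ 2) * h z‖ ≤ k) :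
    ‖c'‖ ≤ k := by
  have key : ∀ r : ℝ, 0 < r → r < 1 → ‖c'‖ * r ^ 2 ≤ k := by
    intro r hr0 hr1
    set φ : ℂ → ℂ := fun z => c' * (r : ℂ) ^ 2 - (1 - (r : ℂ) ^ 2) * h z with hφ
    have hsub : closedBall (0:ℂ) r ⊆ ball (0:ℂ) 1 := by
      intro z hz
      rw [mem_closedBall_zero_iff] at hz
      rw [mem_ball_zero_iff]
      linarith
    have hcont : ContinuousOn φ (closedBall (0:ℂ) r) := by
      intro z hz
      have : ContinuousAt φ z := (((hh z (hsub hz)).continuousAt.const_mul _).const_sub _)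
      exact this.continuousWithinAt
    have hdiff : ∀ z ∈ ball (0:ℂ) r \ (∅ : Set ℂ), DifferentiableAt ℂ φ z := by
      intro z hz
      have hzb : z ∈ ball (0:ℂ) 1 := hsub (ball_subset_closedBall hz.1)
      exact ((hh z hzb).const_mul _).const_sub _
    have hint := Complex.circleIntegral_sub_center_inv_smul_of_differentiable_on_off_countable
      hr0 Set.countable_empty hcont hdiff
    have hφ0 : φ 0 = c' * (r : ℂ) ^ 2 := by
      rw [hφ]; simp [hh0]
    have hnorm : ‖∮ z in C(0, r), (z - 0)⁻¹ • φ z‖ ≤ 2 * π * r * (k / r) := by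
      apply circleIntegral.norm_integral_le_of_norm_le_const hr0.le
      intro z hz
      have hzr : ‖z‖ = r := by
        rw [mem_sphere_zero_iff_norm] at hz
        exact hz
      have hzb : z ∈ ball (0:ℂ) 1 := by rw [mem_ball_zero_iff, hzr]; exact hr1
      have hbz := hb z hzb
      rw [hzr] at hbz
      rw [sub_zero, norm_smul, norm_inv, hzr]
      rw [div_eq_inv_mul]
      exact mul_le_mul le_rfl hbz (norm_nonneg _) (by positivity)
    rw [hint] at hnorm
    rw [norm_smul, hφ0] at hnorm
    have h2pi : ‖(2 * ↑π * Complex.I : ℂ)‖ = 2 * π := by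
      simp [Complex.norm_real, Real.norm_eq_abs, abs_of_pos Real.pi_pos]
    rw [h2pi] at hnorm
    have : ‖c' * (r:ℂ)^2‖ = ‖c'‖ * r^2 := by
      rw [norm_mul, norm_pow, Complex.norm_real, Real.norm_eq_abs, abs_of_pos hr0]
    rw [this] at hnorm
    have h2 : 2 * π * r * (k / r) = 2 * π * k := by field_simp
    rw [h2] at hnorm
    nlinarith [Real.pi_pos]
  have htend : Tendsto (fun r : ℝ => ‖c'‖ * r ^ 2) (𝓝[<] (1:ℝ))
      (𝓝 (‖c'‖ * 1 ^ 2)) := by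
    apply Tendsto.mono_left _ nhdsWithin_le_nhds
    exact (continuous_const.mul ((continuous_id.pow 2))).tendsto 1
  have hev : ∀ᶠ r in 𝓝[<] (1:ℝ), ‖c'‖ * r ^ 2 ≤ k := by
    filter_upwards [Ioo_mem_nhdsLT_of_mem (⟨zero_lt_one, le_refl (1:ℝ)⟩ : (1:ℝ) ∈ Ioc 0 1)]
      with r hr
    exact key r hr.1 hr.2
  have := le_of_tendsto htend hev
  simpa using this

private lemma eventually_f_ne_zero' {f : ℂ → ℂ} {z₀ : ℂ}
    (hfa : AnalyticAt ℂ f z₀) (hd : deriv f z₀ ≠ 0) :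
    ∀ᶠ z in 𝓝[≠] z₀, f z ≠ 0 := by
  rcases eq_or_ne (f z₀) 0 with h0 | h0
  · have hg : ContinuousAt (dslope f z₀) z₀ :=
      continuousAt_dslope_same.2 hfa.differentiableAt
    have hne0 : dslope f z₀ z₀ ≠ 0 := by rwa [dslope_same]
    have hne : ∀ᶠ z in 𝓝 z₀, dslope f z₀ z ≠ 0 := hg.eventually_ne hne0
    filter_upwards [eventually_nhdsWithin_of_eventually_nhds hne,
      self_mem_nhdsWithin] with z hz hz'
    have hsm : (z - z₀) • dslope f z₀ z = f z - f z₀ := sub_smul_dslope f z₀ z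
    rw [h0, sub_zero] at hsm
    rw [← hsm, smul_eq_mul]
    exact mul_ne_zero (sub_ne_zero.2 hz') hz
  · exact eventually_nhdsWithin_of_eventually_nhds (hfa.continuousAt.eventually_ne h0)

private lemma bound_extension {k : ℝ} {c' : ℂ} {f : ℂ → ℂ}
    (hf : AnalyticOnNhd ℂ f (ball 0 1)) (hf0 : f 0 = 0)
    (hf' : ∀ z ∈ ball (0:ℂ) 1, deriv f z ≠ 0)
    (hpart : ∀ z ∈ ball (0:ℂ) 1, z ≠ 0 → f z ≠ 0 →
      ‖c' * (‖z‖ : ℂ) ^ 2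
        - (1 - (‖z‖ : ℂ) ^ 2) * (z * deriv (deriv f) z / deriv f z)‖ ≤ k) :
    ∀ z ∈ ball (0:ℂ) 1,
      ‖c' * (‖z‖ : ℂ) ^ 2
        - (1 - (‖z‖ : ℂ) ^ 2) * (z * deriv (deriv f) z / deriv f z)‖ ≤ k := by
  intro z₀ hz₀
  set F : ℂ → ℝ := fun z => ‖c' * (‖z‖ : ℂ) ^ 2
        - (1 - (‖z‖ : ℂ) ^ 2) * (z * deriv (deriv f) z / deriv f z)‖ with hF
  have hXcont : ContinuousAt (fun z : ℂ => ((‖z‖ : ℝ) : ℂ) ^ 2) z₀ :=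
    ((Complex.continuous_ofReal.comp continuous_norm).pow 2).continuousAt
  have hFcont : ContinuousAt F z₀ := by
    apply continuous_norm.continuousAt.comp
    apply ContinuousAt.sub
    · exact hXcont.const_mul c'
    · exact (continuousAt_const.sub hXcont).mul
        ((continuousAt_id.mul (hf.deriv.deriv z₀ hz₀).continuousAt).div
          (hf.deriv z₀ hz₀).continuousAt (hf' z₀ hz₀))
  have e_ball : ∀ᶠ z in 𝓝[≠] z₀, z ∈ ball (0:ℂ) 1 :=
    eventually_nhdsWithin_of_eventually_nhds (isOpen_ball.mem_nhds hz₀)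
  have e_ne0 : ∀ᶠ z in 𝓝[≠] z₀, z ≠ 0 := by
    rcases eq_or_ne z₀ 0 with rfl | hne
    · exact self_mem_nhdsWithin
    · exact eventually_nhdsWithin_of_eventually_nhds
        (isOpen_compl_singleton.mem_nhds (by simpa using hne))
  have e_f : ∀ᶠ z in 𝓝[≠] z₀, f z ≠ 0 := eventually_f_ne_zero' (hf z₀ hz₀) (hf' z₀ hz₀)
  have hev : ∀ᶠ z in 𝓝[≠] z₀, F z ≤ k := by
    filter_upwards [e_ball, e_ne0, e_f] with z h1 h2 h3
    exact hpart z h1 h2 h3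
  exact le_of_tendsto (hFcont.continuousWithinAt.tendsto) hev

set_option maxHeartbeats 1000000 in
private lemma case_s_one
    (k : ℝ) (hk0 : 0 ≤ k) (hk1 : k < 1) (c' : ℂ)
    (f : ℂ → ℂ) (hf : AnalyticOnNhd ℂ f (ball 0 1)) (hf0 : f 0 = 0)
    (hf'0 : deriv f 0 = 1)
    (hf' : ∀ z ∈ ball (0 : ℂ) 1, deriv f z ≠ 0)
    (hb : ∀ z ∈ ball (0:ℂ) 1,
      ‖c' * (‖z‖ : ℂ) ^ 2
        - (1 - (‖z‖ : ℂ) ^ 2) * (z * deriv (deriv f) z / deriv f z)‖ ≤ k)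
    (z₁ : ℂ) (hz₁b : z₁ ∈ ball (0:ℂ) 1) (hz₁0 : z₁ ≠ 0) (hfz₁ : f z₁ = 0) : False := by
  -- |c'| ≤ k
  have hc' : ‖c'‖ ≤ k := by
    apply cprime_bound (h := fun z => z * deriv (deriv f) z / deriv f z)
    · intro z hz
      exact (differentiableAt_id.mul (hf.deriv.deriv z hz).differentiableAt).div
        (hf.deriv z hz).differentiableAt (hf' z hz)
    · simp
    · exact hb
  have hc1 : (1:ℂ) - c' ≠ 0 := by
    intro hzero
    have : c' = 1 := by linear_combination -hzero
    rw [this] at hc'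
    simp at hc'
    linarith
  have habs1c : 0 < ‖1 - c'‖ := norm_pos_iff.mpr hc1
  set ρ : ℝ := ‖z₁‖ with hρ
  have hρ0 : 0 < ρ := norm_pos_iff.mpr hz₁0
  have hρ1 : ρ < 1 := by rwa [mem_ball_zero_iff] at hz₁b
  -- the function q
  set q : ℂ → ℂ := fun z => dslope f 0 z / deriv f z with hqdef
  have hq0 : q 0 = 1 := by
    rw [hqdef]
    simp only
    rw [dslope_same, hf'0]
    norm_num
  have hqz₁ : q z₁ = 0 := by
    rw [hqdef]
    simp only
    rw [dslope_of_ne f hz₁0, slope_def_field, hfz₁, hf0]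
    simp
  have hq_cont : ContinuousOn q (closedBall (0:ℂ) ρ) := by
    intro z hz
    have hzb : z ∈ ball (0:ℂ) 1 := by
      rw [mem_closedBall_zero_iff] at hz
      rw [mem_ball_zero_iff]
      linarith
    have hdcont : ContinuousAt (dslope f 0) z := by
      rcases eq_or_ne z 0 with rfl | hzne
      · exact continuousAt_dslope_same.2 (hf 0 hzb).differentiableAt
      · have hev : ∀ᶠ w in 𝓝 z, (fun w => f w / w) w = dslope f 0 w := by
          filter_upwards [isOpen_compl_singleton.mem_nhds
            (by simpa using hzne : z ∈ ({0}ᶜ : Set ℂ))] with w hw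
          rw [dslope_of_ne f hw, slope_def_field, hf0, sub_zero, sub_zero]
        exact ContinuousAt.congr ((hf z hzb).continuousAt.div continuousAt_id hzne) hev
    exact (hdcont.div (hf.deriv z hzb).continuousAt (hf' z hzb)).continuousWithinAt
  -- bound for q on the closed ball
  obtain ⟨B, hB⟩ := (isCompact_closedBall (0:ℂ) ρ).exists_bound_of_continuousOn hq_cont
  have hB1 : (1:ℝ) ≤ B := by
    have := hB 0 (mem_closedBall_self hρ0.le)
    rwa [hq0, norm_one] at this
  -- the time horizon
  set T : ℝ := Real.log (B * ‖1 - c'‖ + 2) / 2 with hT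
  have hargpos : (0:ℝ) < B * ‖1 - c'‖ + 2 := by positivity
  have hT2 : Real.exp (2 * T) = B * ‖1 - c'‖ + 2 := by
    rw [hT]
    rw [show 2 * (Real.log (B * ‖1 - c'‖ + 2) / 2)
      = Real.log (B * ‖1 - c'‖ + 2) by ring]
    exact Real.exp_log hargpos
  have hT0 : 0 < T := by
    rw [hT]
    have : (1:ℝ) < B * ‖1 - c'‖ + 2 := by nlinarith
    have := Real.log_pos this
    linarith
  -- the lambda path
  set lam : ℝ → ℂ := fun t => (((Real.exp (2 * t) : ℝ) : ℂ) - 1) / (1 - c') with hlam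
  have hlam0 : lam 0 = 0 := by rw [hlam]; simp
  have hlam_abs : ∀ t : ℝ, 0 ≤ t →
      ‖lam t‖ = (Real.exp (2 * t) - 1) / ‖1 - c'‖ := by
    intro t ht
    rw [hlam]
    simp only
    rw [norm_div]
    congr 1
    rw [show ((Real.exp (2 * t) : ℝ) : ℂ) - 1 = ((Real.exp (2 * t) - 1 : ℝ) : ℂ) by push_cast; ring]
    rw [Complex.norm_real, Real.norm_eq_abs, _root_.abs_of_nonneg]
    have : (1:ℝ) ≤ Real.exp (2 * t) := Real.one_le_exp (by linarith)
    linarith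
  have hlam_cont : Continuous lam := by
    apply Continuous.div_const
    exact (Complex.continuous_ofReal.comp (Real.continuous_exp.comp
      (continuous_const.mul continuous_id))).sub continuous_const
  -- the set S
  set S : Set ℝ := {t : ℝ | t ∈ Icc 0 T ∧
      ∃ z : ℂ, ‖z‖ ≤ ρ * Real.exp (-t) ∧ q z = -lam t} with hS
  have hS0 : 0 ∈ S := by
    refine ⟨⟨le_refl 0, hT0.le⟩, z₁, ?_, ?_⟩
    · rw [neg_zero, Real.exp_zero, mul_one]
    · rw [hqz₁, hlam0, neg_zero]
  -- compactness of S
  set K : Set (ℝ × ℂ) := Icc (0:ℝ) T ×ˢ closedBall (0:ℂ) ρ with hK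
  have hKcpt : IsCompact K := isCompact_Icc.prod (isCompact_closedBall _ _)
  set m : ℝ × ℂ → ℂ := fun p => ((Real.exp (-p.1) : ℝ) : ℂ) * p.2 with hm
  have hm_cont : Continuous m :=
    ((Complex.continuous_ofReal.comp (Real.continuous_exp.comp continuous_fst.neg))).mul
      continuous_snd
  have hm_maps : MapsTo m K (closedBall (0:ℂ) ρ) := by
    intro p hp
    rw [mem_closedBall_zero_iff, hm]
    simp only [norm_mul, Complex.norm_real, Real.norm_eq_abs]
    have h1 : |Real.exp (-p.1)| ≤ 1 := by
      rw [_root_.abs_of_pos (Real.exp_pos _)]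
      exact Real.exp_le_one_iff.2 (by simpa using hp.1.1)
    have h2 : ‖p.2‖ ≤ ρ := by
      have := hp.2
      rwa [mem_closedBall_zero_iff] at this
    calc |Real.exp (-p.1)| * ‖p.2‖ ≤ 1 * ρ :=
      mul_le_mul h1 h2 (norm_nonneg _) zero_le_one
    _ = ρ := one_mul ρ
  set F : ℝ × ℂ → ℂ := fun p => q (m p) + lam p.1 with hF
  have hF_cont : ContinuousOn F K := by
    apply ContinuousOn.add
    · exact hq_cont.comp hm_cont.continuousOn hm_maps
    · exact (hlam_cont.comp continuous_fst).continuousOn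
  set Sprod : Set (ℝ × ℂ) := K ∩ F ⁻¹' {0} with hSprod
  have hSprod_closed : IsClosed Sprod :=
    hF_cont.preimage_isClosed_of_isClosed hKcpt.isClosed isClosed_singleton
  have hSprod_cpt : IsCompact Sprod :=
    hKcpt.of_isClosed_subset hSprod_closed inter_subset_left
  have hSeq : S = Prod.fst '' Sprod := by
    ext t
    constructor
    · rintro ⟨htI, z, hz1, hz2⟩
      refine ⟨(t, ((Real.exp t : ℝ) : ℂ) * z), ⟨⟨htI, ?_⟩, ?_⟩, rfl⟩
      · rw [mem_closedBall_zero_iff, norm_mul, Complex.norm_real, Real.norm_eq_abs,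
          _root_.abs_of_pos (Real.exp_pos _)]
        calc Real.exp t * ‖z‖ ≤ Real.exp t * (ρ * Real.exp (-t)) := by
              apply mul_le_mul_of_nonneg_left hz1 (Real.exp_pos t).le
        _ = ρ * (Real.exp t * Real.exp (-t)) := by ring
        _ = ρ := by rw [← Real.exp_add]; simp
      · show F (t, ((Real.exp t : ℝ) : ℂ) * z) = 0
        rw [hF]
        simp only [hm]
        have : ((Real.exp (-t) : ℝ) : ℂ) * (((Real.exp t : ℝ) : ℂ) * z) = z := by
          rw [← mul_assoc, ← Complex.ofReal_mul, ← Real.exp_add]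
          simp
        rw [this, hz2]
        ring
    · rintro ⟨⟨t, v⟩, ⟨⟨htI, hv⟩, hFv⟩, rfl⟩
      refine ⟨htI, m (t, v), ?_, ?_⟩
      · rw [hm]
        simp only [norm_mul, Complex.norm_real, Real.norm_eq_abs, _root_.abs_of_pos (Real.exp_pos _)]
        rw [mul_comm ρ _]
        apply mul_le_mul_of_nonneg_left _ (Real.exp_pos _).le
        rwa [mem_closedBall_zero_iff] at hv
      · have : F (t, v) = 0 := hFv
        rw [hF] at this
        simp only at this
        linear_combination this
  have hS_cpt : IsCompact S := by
    rw [hSeq]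
    exact hSprod_cpt.image continuous_fst
  -- the supremum
  set t₀ : ℝ := sSup S with ht₀def
  have ht₀S : t₀ ∈ S := hS_cpt.sSup_mem ⟨0, hS0⟩
  obtain ⟨⟨ht₀0, ht₀T⟩, zs, hzsnorm, hqzs⟩ := ht₀S
  have hbdd : BddAbove S := ⟨T, fun t ht => ht.1.2⟩
  -- lam stays bounded on S
  have hlamB : ∀ t ∈ S, Real.exp (2*t) - 1 ≤ B * ‖1 - c'‖ := by
    rintro t ⟨⟨ht0, htT⟩, z, hz1, hz2⟩
    have hzball : z ∈ closedBall (0:ℂ) ρ := by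
      rw [mem_closedBall_zero_iff]
      calc ‖z‖ ≤ ρ * Real.exp (-t) := hz1
      _ ≤ ρ * 1 := by
          apply mul_le_mul_of_nonneg_left _ hρ0.le
          exact Real.exp_le_one_iff.2 (by linarith)
      _ = ρ := mul_one ρ
    have h1 : ‖lam t‖ ≤ B := by
      have := hB z hzball
      rw [hz2] at this
      rwa [norm_neg] at this
    rw [hlam_abs t ht0] at h1
    rw [div_le_iff₀ habs1c] at h1
    exact h1
  have ht₀T' : t₀ < T := by
    rcases lt_or_eq_of_le ht₀T with h | h
    · exact h
    · exfalso
      have := hlamB t₀ ⟨⟨ht₀0, ht₀T⟩, zs, hzsnorm, hqzs⟩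
      rw [h, hT2] at this
      linarith
  -- facts about zs
  have hE1 : (1:ℝ) ≤ Real.exp (2 * t₀) := Real.one_le_exp (by linarith)
  set E : ℝ := Real.exp (2 * t₀) with hE
  have hzs0 : zs ≠ 0 := by
    intro h0
    rw [h0, hq0] at hqzs
    have : lam t₀ = -1 := by linear_combination hqzs
    rw [hlam] at this
    simp only at this
    rw [div_eq_iff hc1] at this
    have hEc : ((E:ℝ):ℂ) = c' := by rw [hE]; linear_combination this
    have : ‖((E:ℝ):ℂ)‖ = ‖c'‖ := by rw [hEc]
    rw [Complex.norm_real, Real.norm_eq_abs, _root_.abs_of_pos (by positivity : (0:ℝ) < E)] at this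
    rw [this] at hE1
    linarith
  have hzsball : zs ∈ ball (0:ℂ) 1 := by
    rw [mem_ball_zero_iff]
    calc ‖zs‖ ≤ ρ * Real.exp (-t₀) := hzsnorm
    _ ≤ ρ * 1 := mul_le_mul_of_nonneg_left (Real.exp_le_one_iff.2 (by linarith)) hρ0.le
    _ < 1 := by linarith
  set x : ℝ := ‖zs‖ ^ 2 with hx
  have hx0 : 0 < x := by rw [hx]; exact pow_pos (norm_pos_iff.mpr hzs0) 2
  have hx1 : x < 1 := by
    have : ‖zs‖ < 1 := by rwa [mem_ball_zero_iff] at hzsball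
    nlinarith [norm_nonneg zs]
  have hEx : E * x ≤ ρ ^ 2 := by
    have h1 : ‖zs‖ ^ 2 ≤ (ρ * Real.exp (-t₀)) ^ 2 :=
      pow_le_pow_left₀ (norm_nonneg zs) hzsnorm 2
    have h2 : E * Real.exp (-t₀) ^ 2 = 1 := by
      rw [hE, pow_two, ← Real.exp_add, ← Real.exp_add,
        show 2 * t₀ + (-t₀ + -t₀) = 0 by ring, Real.exp_zero]
    calc E * x ≤ E * (ρ * Real.exp (-t₀))^2 := by
          apply mul_le_mul_of_nonneg_left h1 (by positivity)
    _ = ρ^2 * (E * Real.exp (-t₀)^2) := by ring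
    _ = ρ^2 := by rw [h2, mul_one]
  have hEx1 : E * x < 1 := lt_of_le_of_lt hEx (by nlinarith)
  -- the pointwise bound at zs
  set H : ℂ := zs * deriv (deriv f) zs / deriv f zs with hH
  set w : ℂ := c' * ((x:ℝ):ℂ) - (1 - ((x:ℝ):ℂ)) * H with hw
  have hXx : ((‖zs‖ : ℝ) : ℂ) ^ 2 = ((x:ℝ):ℂ) := by
    rw [hx]; push_cast; ring
  have hwabs : ‖w‖ ≤ k := by
    have := hb zs hzsball
    rw [hXx] at this
    exact this
  have hlc : lam t₀ * (1 - c') = ((E:ℝ):ℂ) - 1 := by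
    rw [hlam, hE]
    simp only
    rw [div_mul_cancel₀ _ hc1]
  set Dζ : ℂ := 1 + lam t₀ * (1 + H) with hDζ
  set ζ : ℂ := Dζ * (1 - ((x:ℝ):ℂ)) * (1 - c') with hζdef
  set A : ℝ := E * (1 - x) with hA
  have hApos : 0 < A := by rw [hA]; nlinarith
  have hζ : ζ = ((A:ℝ):ℂ) + (c' * (((E * x - 1 : ℝ)):ℂ) - (((E - 1 : ℝ)):ℂ) * w) := by
    have hwdef : (1 - ((x:ℝ):ℂ)) * H = c' * ((x:ℝ):ℂ) - w := by rw [hw]; ring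
    have hstep : ζ = (1 - ((x:ℝ):ℂ)) * (1 - c')
        + (lam t₀ * (1 - c')) * ((1 - ((x:ℝ):ℂ)) + (1 - ((x:ℝ):ℂ)) * H) := by
      rw [hζdef, hDζ]; ring
    rw [hwdef, hlc] at hstep
    rw [hstep, hA]
    push_cast
    ring
  have hdist : ‖ζ - ((A:ℝ):ℂ)‖ < A := by
    have heq : ζ - ((A:ℝ):ℂ) = c' * (((E * x - 1 : ℝ)):ℂ) - (((E - 1 : ℝ)):ℂ) * w := by
      rw [hζ]; ring
    rw [heq]
    have h1 : ‖c' * (((E * x - 1 : ℝ)):ℂ)‖ ≤ k * (1 - E * x) := by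
      rw [norm_mul, Complex.norm_real, Real.norm_eq_abs, _root_.abs_of_neg (by linarith : E * x - 1 < 0)]
      rw [show -(E * x - 1) = 1 - E * x by ring]
      exact mul_le_mul_of_nonneg_right hc' (by linarith)
    have h2 : ‖(((E - 1 : ℝ)):ℂ) * w‖ ≤ (E - 1) * k := by
      rw [norm_mul, Complex.norm_real, Real.norm_eq_abs, _root_.abs_of_nonneg (by linarith : (0:ℝ) ≤ E - 1)]
      exact mul_le_mul_of_nonneg_left hwabs (by linarith)
    calc ‖c' * (((E * x - 1 : ℝ)):ℂ) - (((E - 1 : ℝ)):ℂ) * w‖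
        ≤ ‖c' * (((E * x - 1 : ℝ)):ℂ)‖ + ‖(((E - 1 : ℝ)):ℂ) * w‖ :=
          norm_sub_le _ _
    _ ≤ k * (1 - E * x) + (E - 1) * k := add_le_add h1 h2
    _ = k * (E * (1 - x)) := by ring
    _ < 1 * (E * (1 - x)) := by
        apply mul_lt_mul_of_pos_right hk1
        exact mul_pos (by linarith) (by linarith)
    _ = A := by rw [hA]; ring
  have hζne : ζ ≠ 0 := by
    intro h0
    rw [h0, zero_sub, norm_neg, Complex.norm_real, Real.norm_eq_abs, _root_.abs_of_pos hApos] at hdist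
    exact lt_irrefl A hdist
  have hDζne : Dζ ≠ 0 := by
    intro h0
    apply hζne
    rw [hζdef, h0, zero_mul, zero_mul]
  have h1xne : (1:ℂ) - ((x:ℝ):ℂ) ≠ 0 := by
    rw [show (1:ℂ) - ((x:ℝ):ℂ) = ((1 - x : ℝ):ℂ) by push_cast; ring]
    rw [Complex.ofReal_ne_zero]
    linarith
  have hkey_re : 1 < ((((2 * A : ℝ)):ℂ) / ζ).re := re_div_gt_one hApos hdist
  -- derivative of q at zs
  have hfzs_an : AnalyticAt ℂ f zs := hf zs hzsball
  have hf'zs_an : AnalyticAt ℂ (deriv f) zs := hf.deriv zs hzsball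
  have hdzs : deriv f zs ≠ 0 := hf' zs hzsball
  set Qloc : ℂ → ℂ := fun z => f z / (z * deriv f z) with hQloc
  have hq_ev : q =ᶠ[𝓝 zs] Qloc := by
    filter_upwards [isOpen_compl_singleton.mem_nhds
      (by simpa using hzs0 : zs ∈ ({0}ᶜ : Set ℂ))] with z hz
    have hz0 : (z : ℂ) ≠ 0 := hz
    rw [hqdef, hQloc]
    simp only
    rw [dslope_of_ne f hz0, slope_def_field, hf0, sub_zero, sub_zero, div_div]
  have hQan : AnalyticAt ℂ Qloc zs :=
    AnalyticAt.div hfzs_an (analyticAt_id.mul hf'zs_an) (mul_ne_zero hzs0 hdzs)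
  have hqan : AnalyticAt ℂ q zs := hQan.congr hq_ev.symm
  have hqzs_val : q zs = f zs / (zs * deriv f zs) := by
    rw [hq_ev.eq_of_nhds, hQloc]
  set Dq : ℂ := (1 - q zs * (1 + H)) / zs with hDq
  have hQder : HasDerivAt Qloc ((deriv f zs * (zs * deriv f zs)
      - f zs * (1 * deriv f zs + zs * deriv (deriv f) zs)) / (zs * deriv f zs) ^ 2) zs :=
    (hfzs_an.differentiableAt.hasDerivAt).div
      ((hasDerivAt_id zs).mul hf'zs_an.differentiableAt.hasDerivAt)
      (mul_ne_zero hzs0 hdzs)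
  have hD₀ : (deriv f zs * (zs * deriv f zs)
      - f zs * (1 * deriv f zs + zs * deriv (deriv f) zs)) / (zs * deriv f zs) ^ 2 = Dq := by
    rw [hDq, hqzs_val, hH]
    field_simp
  have hqder : HasDerivAt q Dq zs := by
    rw [← hD₀]
    exact hq_ev.hasDerivAt_iff.2 hQder
  have hstrict : HasStrictDerivAt q Dq zs := by
    obtain ⟨pp, hpp⟩ := hqan
    have h1 := hpp.hasStrictDerivAt
    have h2 : (pp 1 fun _ => 1) = Dq := by
      rw [← hpp.deriv, hqder.deriv]
    rwa [h2] at h1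
  have hzsDq : zs * Dq = Dζ := by
    have h1 : zs * Dq = 1 - q zs * (1 + H) := by
      rw [hDq]
      field_simp
    rw [h1, hqzs, hDζ]
    ring
  have hDqne : Dq ≠ 0 := by
    intro h0
    apply hDζne
    rw [← hzsDq, h0, mul_zero]
  -- inverse function
  set ψ : ℂ → ℂ := hstrict.localInverse q Dq zs hDqne with hψ
  have hψstrict : HasStrictDerivAt ψ Dq⁻¹ (q zs) := hstrict.to_localInverse hDqne
  have hleft : ψ (q zs) = zs :=
    (hstrict.hasStrictFDerivAt_equiv hDqne).localInverse_apply_image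
  have hright : ∀ᶠ y in 𝓝 (q zs), q (ψ y) = y :=
    (hstrict.hasStrictFDerivAt_equiv hDqne).eventually_right_inverse
  -- derivative of lam
  have h2t : HasDerivAt (fun t : ℝ => 2 * t) 2 t₀ := by
    simpa using (hasDerivAt_id t₀).const_mul (2:ℝ)
  have hexp2t : HasDerivAt (fun t : ℝ => Real.exp (2 * t)) (Real.exp (2 * t₀) * 2) t₀ :=
    (Real.hasDerivAt_exp (2 * t₀)).comp t₀ h2t
  have hlamder : HasDerivAt lam (((2 * E : ℝ) : ℂ) / (1 - c')) t₀ := by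
    have h1 : HasDerivAt (fun t : ℝ => ((Real.exp (2 * t) : ℝ) : ℂ))
        ((Real.exp (2 * t₀) * 2 : ℝ) : ℂ) t₀ := hexp2t.ofReal_comp
    have h2 := (h1.sub_const 1).div_const (1 - c')
    have h3 : ((Real.exp (2 * t₀) * 2 : ℝ) : ℂ) / (1 - c') = ((2 * E : ℝ) : ℂ) / (1 - c') := by
      rw [hE]; push_cast; ring
    rw [← h3]
    exact h2
  set U : ℂ := -(((2 * E : ℝ) : ℂ) / (1 - c')) * Dq⁻¹ with hU
  set u : ℝ → ℂ := fun t => ψ (-lam t) with hu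
  have hqzs' : -lam t₀ = q zs := by rw [hqzs]
  have hψder : HasDerivAt ψ Dq⁻¹ (-lam t₀) := by
    rw [hqzs']; exact hψstrict.hasDerivAt
  have hneglam : HasDerivAt (fun t => -lam t) (-(((2 * E : ℝ) : ℂ) / (1 - c'))) t₀ :=
    hlamder.neg
  have huder : HasDerivAt u U t₀ := by
    have := hψder.scomp t₀ hneglam
    exact this.congr_deriv (by rw [hU, smul_eq_mul])
  have hut₀ : u t₀ = zs := by
    rw [hu]; simp only; rw [hqzs', hleft]
  -- the function v and its square norm
  set v : ℝ → ℂ := fun t => u t * ((Real.exp t : ℝ) : ℂ) with hv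
  have hexpt : HasDerivAt (fun t : ℝ => ((Real.exp t : ℝ) : ℂ)) ((Real.exp t₀ : ℝ) : ℂ) t₀ :=
    (Real.hasDerivAt_exp t₀).ofReal_comp
  set V : ℂ := U * ((Real.exp t₀ : ℝ) : ℂ) + zs * ((Real.exp t₀ : ℝ) : ℂ) with hV
  have hvder : HasDerivAt v V t₀ := by
    have := huder.mul hexpt
    rw [hut₀] at this
    exact this
  have hvre : HasDerivAt (fun t => (v t).re) V.re t₀ := by
    have := Complex.reCLM.hasFDerivAt.comp_hasDerivAt t₀ hvder
    exact this.congr_deriv (by simp)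
  have hvim : HasDerivAt (fun t => (v t).im) V.im t₀ := by
    have := Complex.imCLM.hasFDerivAt.comp_hasDerivAt t₀ hvder
    exact this.congr_deriv (by simp)
  set g : ℝ → ℝ := fun t => (v t).re * (v t).re + (v t).im * (v t).im with hgdef
  have hgder : HasDerivAt g
      (V.re * (v t₀).re + (v t₀).re * V.re + (V.im * (v t₀).im + (v t₀).im * V.im)) t₀ :=
    (hvre.mul hvre).add (hvim.mul hvim)
  -- key: the derivative is negative
  have hv0 : v t₀ = zs * ((Real.exp t₀ : ℝ) : ℂ) := by
    rw [hv]; simp only; rw [hut₀]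
  have hzsconj : (starRingEnd ℂ) zs * zs = ((x : ℝ) : ℂ) := by
    rw [mul_comm, Complex.mul_conj, hx]
    rw [Complex.normSq_eq_norm_sq]
  have hconj : (starRingEnd ℂ) zs = ((x : ℝ) : ℂ) / zs := by
    rw [eq_div_iff hzs0]
    exact hzsconj
  have hcastA : ((2 * A : ℝ) : ℂ) = ((2 * E : ℝ) : ℂ) * (1 - ((x : ℝ) : ℂ)) := by
    rw [hA]; push_cast; ring
  have hLamζ : ((2 * E : ℝ) : ℂ) / (1 - c') / Dζ = ((2 * A : ℝ) : ℂ) / ζ := by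
    rw [hζdef, hcastA]
    field_simp
  have hDqinv : Dq⁻¹ = zs / Dζ := by
    rw [← hzsDq, eq_div_iff (mul_ne_zero hzs0 hDqne)]
    field_simp
  have hcU : (starRingEnd ℂ) zs * U = -(((x : ℝ) : ℂ)) * (((2 * A : ℝ) : ℂ) / ζ) := by
    rw [hU, hDqinv, hconj, ← hLamζ]
    field_simp
  have he2 : ((Real.exp t₀ : ℝ) : ℂ) * ((Real.exp t₀ : ℝ) : ℂ) = ((E : ℝ) : ℂ) := by
    rw [← Complex.ofReal_mul, ← Real.exp_add, hE, show t₀ + t₀ = 2 * t₀ by ring]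
  have hP : (starRingEnd ℂ) (v t₀) * V = ((E * x : ℝ) : ℂ) * (1 - ((2 * A : ℝ) : ℂ) / ζ) := by
    rw [hv0, hV, map_mul, Complex.conj_ofReal]
    have expand : (starRingEnd ℂ) zs * ((Real.exp t₀ : ℝ) : ℂ) *
        (U * ((Real.exp t₀ : ℝ) : ℂ) + zs * ((Real.exp t₀ : ℝ) : ℂ))
        = (((Real.exp t₀ : ℝ) : ℂ) * ((Real.exp t₀ : ℝ) : ℂ)) *
          ((starRingEnd ℂ) zs * U + (starRingEnd ℂ) zs * zs) := by ring
    rw [expand, he2, hcU, hzsconj]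
    push_cast
    ring
  have hPre : ((starRingEnd ℂ) (v t₀) * V).re < 0 := by
    have h1 : ((starRingEnd ℂ) (v t₀) * V).re
        = (E * x) * (1 - (((2 * A : ℝ) : ℂ) / ζ).re) := by
      rw [hP, Complex.mul_re]
      simp [Complex.ofReal_re, Complex.ofReal_im, Complex.sub_re, Complex.sub_im,
        Complex.one_re, Complex.one_im]
    rw [h1]
    have hExpos : 0 < E * x := by nlinarith
    nlinarith [hkey_re]
  have hGneg : V.re * (v t₀).re + (v t₀).re * V.re + (V.im * (v t₀).im + (v t₀).im * V.im) < 0 := by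
    have hGP : ((starRingEnd ℂ) (v t₀) * V).re = (v t₀).re * V.re + (v t₀).im * V.im := by
      simp [Complex.mul_re, Complex.conj_re, Complex.conj_im]
      try ring
    rw [hGP] at hPre
    linarith
  -- flow forward in time
  have hdec : ∀ᶠ t in 𝓝[>] t₀, g t < g t₀ := slope_dec hgder hGneg
  have hrt : ∀ᶠ t in 𝓝[>] t₀, q (u t) = -lam t := by
    apply eventually_nhdsWithin_of_eventually_nhds
    have htend : Tendsto (fun t => -lam t) (𝓝 t₀) (𝓝 (q zs)) := by
      rw [← hqzs']
      exact (hlam_cont.neg.tendsto t₀)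
    exact htend.eventually hright
  have hltT : ∀ᶠ t in 𝓝[>] t₀, t < T :=
    eventually_nhdsWithin_of_eventually_nhds (isOpen_Iio.mem_nhds ht₀T')
  have hgtt₀ : ∀ᶠ t in 𝓝[>] t₀, t₀ < t := self_mem_nhdsWithin
  obtain ⟨t', hd1, hd2, hd3, hd4⟩ := (hdec.and (hrt.and (hltT.and hgtt₀))).exists
  -- t' belongs to S
  have hgt₀val : g t₀ ≤ ρ ^ 2 := by
    have h1 : g t₀ = ‖v t₀‖ ^ 2 := by
      rw [hgdef]
      simp only
      rw [← Complex.normSq_eq_norm_sq, Complex.normSq_apply]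
    rw [h1, hv0, norm_mul, Complex.norm_real, Real.norm_eq_abs, _root_.abs_of_pos (Real.exp_pos t₀)]
    have h2 : ‖zs‖ * Real.exp t₀ ≤ ρ := by
      calc ‖zs‖ * Real.exp t₀ ≤ ρ * Real.exp (-t₀) * Real.exp t₀ :=
        mul_le_mul_of_nonneg_right hzsnorm (Real.exp_pos t₀).le
      _ = ρ * (Real.exp (-t₀) * Real.exp t₀) := by ring
      _ = ρ := by rw [← Real.exp_add]; simp
    nlinarith [norm_nonneg zs, Real.exp_pos t₀, mul_nonneg (norm_nonneg zs) (Real.exp_pos t₀).le]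
  have hvt' : ‖v t'‖ < ρ := by
    have h1 : g t' = ‖v t'‖ ^ 2 := by
      rw [hgdef]
      simp only
      rw [← Complex.normSq_eq_norm_sq, Complex.normSq_apply]
    have h2 : ‖v t'‖ ^ 2 < ρ ^ 2 := by
      rw [← h1]
      exact lt_of_lt_of_le hd1 hgt₀val
    exact lt_of_pow_lt_pow_left₀ 2 hρ0.le h2
  have hut' : ‖u t'‖ ≤ ρ * Real.exp (-t') := by
    have h1 : ‖v t'‖ = ‖u t'‖ * Real.exp t' := by
      rw [hv]
      simp only
      rw [norm_mul, Complex.norm_real, Real.norm_eq_abs, _root_.abs_of_pos (Real.exp_pos t')]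
    rw [h1] at hvt'
    have h2 : ‖u t'‖ * Real.exp t' * Real.exp (-t') ≤ ρ * Real.exp (-t') :=
      mul_le_mul_of_nonneg_right hvt'.le (Real.exp_pos (-t')).le
    calc ‖u t'‖ = ‖u t'‖ * (Real.exp t' * Real.exp (-t')) := by
          rw [← Real.exp_add]; simp
    _ = ‖u t'‖ * Real.exp t' * Real.exp (-t') := by ring
    _ ≤ ρ * Real.exp (-t') := h2
  have ht'S : t' ∈ S := by
    refine ⟨⟨by linarith, hd3.le⟩, u t', hut', hd2⟩
  have : t' ≤ t₀ := le_csSup hbdd ht'S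
  linarith
theorem ruscheweyh_nonvanishing
    (a b k : ℝ) (ha : 0 < a) (hk0 : 0 ≤ k) (hk1 : k < 1)
    (c s : ℂ) (hs : s = (a : ℂ) + (b : ℂ) * Complex.I)
    (M : ℝ)
    (hM : M = if a ≤ 1 then a * k * ‖s‖ + (a - 1) * ‖s + c‖
              else k * ‖s‖)
    (f : ℂ → ℂ)
    (hf : AnalyticOnNhd ℂ f (ball 0 1)) (hf0 : f 0 = 0) (hf'0 : deriv f 0 = 1)
    (hf' : ∀ z ∈ ball (0 : ℂ) 1, deriv f z ≠ 0)
    (hineq : ∀ z ∈ ball (0 : ℂ) 1 \ {0}, f z ≠ 0 →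
      ‖c * (‖z‖ : ℂ) ^ 2 + s
        - (a : ℂ) * (1 - (‖z‖ : ℂ) ^ 2) *
          (s * (1 + z * deriv (deriv f) z / deriv f z)
            + (1 - s) * (z * deriv f z / f z))‖ ≤ M) :
    ∀ z ∈ ball (0 : ℂ) 1 \ {0}, f z ≠ 0 := by
  rintro z₁ ⟨hz₁b, hz₁0'⟩ hfz₁
  have hz₁0 : z₁ ≠ 0 := by simpa using hz₁0'
  rcases eq_or_ne s 1 with hs1 | hs1
  · -- the case s = 1, i.e. a = 1, b = 0
    have h2 : (a : ℂ) + (b : ℂ) * Complex.I = 1 := by rw [← hs, hs1]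
    have ha1 : a = 1 := by
      have := congrArg Complex.re h2
      simpa using this
    have haC : (a : ℂ) = 1 := by rw [ha1]; norm_num
    have hMk : M = k := by
      rw [hM, if_pos (le_of_eq ha1), hs1, ha1]
      simp
    have hball : ∀ z ∈ ball (0:ℂ) 1, z ≠ 0 → f z ≠ 0 →
        ‖(c + 1) * (‖z‖ : ℂ) ^ 2
          - (1 - (‖z‖ : ℂ) ^ 2) * (z * deriv (deriv f) z / deriv f z)‖ ≤ k := by
      intro z hzb hz0 hfz
      have hz : z ∈ ball (0:ℂ) 1 \ {0} := ⟨hzb, by simpa using hz0⟩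
      have hle := hineq z hz hfz
      have heq : c * (‖z‖ : ℂ) ^ 2 + s
          - (a : ℂ) * (1 - (‖z‖ : ℂ) ^ 2) *
            (s * (1 + z * deriv (deriv f) z / deriv f z)
              + (1 - s) * (z * deriv f z / f z))
          = (c + 1) * (‖z‖ : ℂ) ^ 2
            - (1 - (‖z‖ : ℂ) ^ 2) * (z * deriv (deriv f) z / deriv f z) := by
        rw [hs1, haC]; ring
      rw [heq, hMk] at hle
      exact hle
    have hb2 := bound_extension hf hf0 hf' hball
    exact case_s_one k hk0 hk1 (c + 1) f hf hf0 hf'0 hf' hb2 z₁ hz₁b hz₁0 hfz₁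
  · exact case_s_ne_one a ha c s M hs1 f hf hf' hineq z₁ hz₁b hz₁0 hfz₁
end

section
/- Let s = a + ib with a > 0 and b real, let c be a complex constant, and let M ≥ 0 be a real constant. Let f ∈ 𝒜 with f'(z) ≠ 0 for all z in 𝔻 and f(z) ≠ 0 for all z ∈ 𝔻 \ {0}. If for all z ∈ 𝔻 \ {0} one has |c|z|² + s − a(1−|z|²)·[s(1 + z f''(z)/f'(z)) + (1−s)·z f'(z)/f(z)]| ≤ M, then |c + s| ≤ M. -/
open Metric Set

theorem ruscheweyh_inequality_at_boundary
    (a b : ℝ) (ha : 0 < a)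
    (c s : ℂ) (hs : s = (a : ℂ) + (b : ℂ) * Complex.I)
    (M : ℝ) (hM : 0 ≤ M)
    (f : ℂ → ℂ)
    (hf : AnalyticOnNhd ℂ f (ball 0 1)) (hf0 : f 0 = 0) (hf'0 : deriv f 0 = 1)
    (hf' : ∀ z ∈ ball (0 : ℂ) 1, deriv f z ≠ 0)
    (hfz : ∀ z ∈ ball (0 : ℂ) 1 \ {0}, f z ≠ 0)
    (hineq : ∀ z ∈ ball (0 : ℂ) 1 \ {0},
      ‖c * (‖z‖ : ℂ) ^ 2 + s
        - (a : ℂ) * (1 - (‖z‖ : ℂ) ^ 2) *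
          (s * (1 + z * deriv (deriv f) z / deriv f z)
            + (1 - s) * (z * deriv f z / f z))‖ ≤ M) :
    ‖c + s‖ ≤ M := by
  -- g = dslope f 0, the analytic extension of f z / z
  set g : ℂ → ℂ := dslope f 0 with hg_def
  have h01 : (0 : ℂ) ∈ ball (0 : ℂ) 1 := by simp
  have hg0 : g 0 = 1 := by rw [hg_def, dslope_same, hf'0]
  have hgz : ∀ z ∈ ball (0 : ℂ) 1, z ≠ 0 → g z = f z / z := by
    intro z _ hz
    rw [hg_def, dslope_of_ne _ hz, slope_def_field, hf0, sub_zero, sub_zero]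
  have hgne : ∀ z ∈ ball (0 : ℂ) 1, g z ≠ 0 := by
    intro z hz
    rcases eq_or_ne z 0 with rfl | hz0
    · rw [hg0]; exact one_ne_zero
    · rw [hgz z hz hz0]
      exact div_ne_zero (hfz z ⟨hz, hz0⟩) hz0
  have hgdiff : ∀ z ∈ ball (0 : ℂ) 1, DifferentiableAt ℂ g z := by
    intro z hz
    rcases eq_or_ne z 0 with rfl | hz0
    · obtain ⟨p, hp⟩ := hf 0 h01
      exact hp.has_fpower_series_dslope_fslope.analyticAt.differentiableAt
    · exact (differentiableAt_dslope_of_ne hz0).2 (hf z hz).differentiableAt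
  -- derivatives of f are differentiable
  have hfd : ∀ z ∈ ball (0 : ℂ) 1, DifferentiableAt ℂ f z :=
    fun z hz => (hf z hz).differentiableAt
  have hf'a : AnalyticOnNhd ℂ (deriv f) (ball 0 1) := hf.deriv
  have hf'd : ∀ z ∈ ball (0 : ℂ) 1, DifferentiableAt ℂ (deriv f) z :=
    fun z hz => (hf'a z hz).differentiableAt
  have hf''d : ∀ z ∈ ball (0 : ℂ) 1, DifferentiableAt ℂ (deriv (deriv f)) z :=
    fun z hz => (hf'a.deriv z hz).differentiableAt
  -- the analytic function H
  set H : ℂ → ℂ := fun z =>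
    s * (1 + z * deriv (deriv f) z / deriv f z) + (1 - s) * (deriv f z / g z) with hH_def
  have hHdiff : ∀ z ∈ ball (0 : ℂ) 1, DifferentiableAt ℂ H z := by
    intro z hz
    apply DifferentiableAt.add
    · exact (differentiableAt_const _).mul <| (differentiableAt_const _).add <|
        ((differentiableAt_id.mul (hf''d z hz)).div (hf'd z hz) (hf' z hz))
    · exact (differentiableAt_const _).mul <| (hf'd z hz).div (hgdiff z hz) (hgne z hz)
  have hH0 : H 0 = 1 := by
    simp [hH_def, hg0, hf'0]
  have hHeq : ∀ z ∈ ball (0 : ℂ) 1, z ≠ 0 →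
      H z = s * (1 + z * deriv (deriv f) z / deriv f z) + (1 - s) * (z * deriv f z / f z) := by
    intro z hz hz0
    have : deriv f z / g z = z * deriv f z / f z := by
      rw [hgz z hz hz0]
      field_simp
    rw [hH_def]
    simp only []
    rw [this]
  -- key estimate for each radius r ∈ (0,1)
  have key : ∀ r : ℝ, 0 < r → r < 1 →
      ‖c * (r : ℂ) ^ 2 + s - (a : ℂ) * (1 - (r : ℂ) ^ 2)‖ ≤ M := by
    intro r hr0 hr1
    set Φ : ℂ → ℂ := fun z => c * (r : ℂ) ^ 2 + s - (a : ℂ) * (1 - (r : ℂ) ^ 2) * H z with hΦ_def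
    have hsub : closedBall (0 : ℂ) r ⊆ ball (0 : ℂ) 1 := by
      intro z hz
      rw [mem_closedBall, dist_zero_right] at hz
      rw [mem_ball, dist_zero_right]
      exact lt_of_le_of_lt hz hr1
    have hΦd : DiffContOnCl ℂ Φ (ball (0 : ℂ) r) := by
      apply DifferentiableOn.diffContOnCl
      rw [closure_ball (0:ℂ) (ne_of_gt hr0)]
      intro z hz
      exact (((differentiableAt_const _).sub ((differentiableAt_const _).mul
        (hHdiff z (hsub hz)))).differentiableWithinAt)
    have hfr : ∀ z ∈ frontier (ball (0 : ℂ) r), ‖Φ z‖ ≤ M := by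
      rw [frontier_ball (0:ℂ) (ne_of_gt hr0)]
      intro z hz
      rw [mem_sphere_iff_norm, sub_zero] at hz
      have hz0 : z ≠ 0 := by
        intro h; rw [h, norm_zero] at hz; exact (ne_of_gt hr0) hz.symm
      have hzb : z ∈ ball (0 : ℂ) 1 := by
        rw [mem_ball, dist_zero_right, hz]; exact hr1
      have habs : ((‖z‖ : ℝ) : ℂ) = (r : ℂ) := by
        exact_mod_cast hz
      have := hineq z ⟨hzb, hz0⟩
      rw [habs] at this
      rw [hΦ_def]
      simp only []
      rw [hHeq z hzb hz0]
      exact this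
    have h0cl : (0 : ℂ) ∈ closure (ball (0 : ℂ) r) := by
      rw [closure_ball (0:ℂ) (ne_of_gt hr0)]
      exact mem_closedBall_self (le_of_lt hr0)
    have := Complex.norm_le_of_forall_mem_frontier_norm_le isBounded_ball hΦd hfr h0cl
    rw [hΦ_def] at this
    simp only [hH0, mul_one] at this
    exact this
  -- pass to the limit r → 1⁻
  have hcont : Filter.Tendsto (fun r : ℝ => ‖c * (r:ℂ)^2 + s - (a:ℂ) * (1 - (r:ℂ)^2)‖)
      (nhdsWithin 1 (Iio 1)) (nhds (‖c + s‖)) := by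
    have hc : Continuous (fun r : ℝ => ‖c * (r:ℂ)^2 + s - (a:ℂ) * (1 - (r:ℂ)^2)‖) :=
      continuous_norm.comp (by fun_prop)
    have := hc.tendsto 1
    simp only [Complex.ofReal_one, one_pow, mul_one, sub_self, mul_zero, sub_zero] at this
    exact this.mono_left nhdsWithin_le_nhds
  apply le_of_tendsto hcont
  filter_upwards [Ioo_mem_nhdsLT_of_mem (show (1:ℝ) ∈ Ioc (0:ℝ) 1 by constructor <;> norm_num)]
    with r hr
  exact key r hr.1 hr.2
end

section
/- Let s = a + ib with a > 0 and b real, let k ∈ [0,1), and let c be a complex constant, with M = a·k·|s| + (a−1)·|s+c| if 0 < a ≤ 1 and M = k·|s| if a > 1. Let f ∈ 𝒜 with f'(z) ≠ 0 for all z in 𝔻 and f(z) ≠ 0 for all z ∈ 𝔻 \ {0}, and assume |c|z|² + s − a(1−|z|²)·H_s(z)| ≤ M for all z ∈ 𝔻 \ {0}, where H_s(z) = s(1 + z f''(z)/f'(z)) + (1−s)·z f'(z)/f(z). Define P(z,t) = (c/a)·e^{−2t} + 1 + (e^{−2t} − 1)·H_s(z). Then for all z ∈ 𝔻 \ {0}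 and all t ∈ [0,∞), one has |a·P(e^{−st/|s|} z, t/|s|) + i b| ≤ k·|s|. -/
open Metric Set

lemma annulus_liminf (g : ℂ → ℂ)
    (hg : AnalyticOnNhd ℂ g (ball (0:ℂ) 1 \ closedBall 0 (1/2)))
    (ε : ℝ) (hε : 0 < ε)
    (hlow : ∀ w ∈ ball (0:ℂ) 1 \ closedBall 0 (1/2), ε ≤ (1 - ‖w‖^2) * ‖g w‖) : False := by
  set W : Set ℂ := ball (0:ℂ) 1 \ closedBall 0 (1/2) with hW
  have hWopen : IsOpen W := isOpen_ball.sdiff isClosed_closedBall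
  have hmemW : ∀ w : ℂ, 1/2 < ‖w‖ → ‖w‖ < 1 → w ∈ W := by
    intro w h1 h2
    constructor
    · rw [mem_ball, dist_zero_right]; exact h2
    · rw [mem_closedBall, dist_zero_right]; push_neg; exact h1
  have hgne : ∀ w ∈ W, g w ≠ 0 := by
    intro w hw hzero
    have h2 := hlow w hw
    rw [hzero] at h2
    simp at h2
    exact absurd h2 (not_le.2 hε)
  -- h = g⁻¹ analytic on W
  have hh : AnalyticOnNhd ℂ (fun w => (g w)⁻¹) W := hg.inv hgne
  have hbound : ∀ w ∈ W, ‖(g w)⁻¹‖ ≤ (1 - ‖w‖^2) / ε := by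
    intro w hw
    have h2 := hlow w hw
    have hg0 : g w ≠ 0 := hgne w hw
    have hgpos : 0 < ‖g w‖ := norm_pos_iff.2 hg0
    rw [norm_inv]
    rw [inv_le_iff_one_le_mul₀ hgpos, div_mul_eq_mul_div, le_div_iff₀ hε]
    linarith
  -- key: for all n, ‖(g (3/4))⁻¹‖ ≤ (0.8)^n / ε
  have key : ∀ n : ℕ, ‖(g ((3/4 : ℝ) : ℂ))⁻¹‖ * (3/4:ℝ)^n ≤ (0.6:ℝ)^n / ε := by
    intro n
    set m : ℝ := min ((0.6:ℝ)^n) (1/4) with hm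
    have hmpos : 0 < m := lt_min (by positivity) (by norm_num)
    have hmle : m ≤ 1/4 := min_le_right _ _
    set r : ℝ := Real.sqrt (1 - m) with hr
    have hrsq : r^2 = 1 - m := Real.sq_sqrt (by linarith)
    have hrpos : 0 < r := Real.sqrt_pos.2 (by linarith)
    have hrlt1 : r < 1 := by
      nlinarith [hrsq, hrpos]
    have hr34 : 3/4 < r := by nlinarith [hrsq, hrpos]
    set U : Set ℂ := ball (0:ℂ) r \ closedBall 0 (0.6) with hU
    have hUopen : IsOpen U := isOpen_ball.sdiff isClosed_closedBall
    have hclU : closure U ⊆ closedBall (0:ℂ) r ∩ (ball 0 (0.6))ᶜ := by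
      have h1 : closure U ⊆ closure (ball (0:ℂ) r) ∩ closure ((closedBall (0:ℂ) (0.6))ᶜ) := by
        refine subset_trans ?_ (closure_inter_subset_inter_closure _ _)
        rw [hU, diff_eq]
      refine h1.trans ?_
      rw [closure_ball (0:ℂ) (ne_of_gt hrpos), closure_compl, interior_closedBall (0:ℂ) (by norm_num)]
    have hclUW : closure U ⊆ W := by
      intro w hw
      obtain ⟨h1, h2⟩ := hclU hw
      rw [mem_closedBall, dist_zero_right] at h1
      rw [mem_compl_iff, mem_ball, dist_zero_right, not_lt] at h2
      exact hmemW w (by linarith) (by linarith)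
    have hUW : U ⊆ W := subset_closure.trans hclUW
    -- φ = (g w)⁻¹ * w^n
    set φ : ℂ → ℂ := fun w => (g w)⁻¹ * w^n with hφ
    have hφana : AnalyticOnNhd ℂ φ W := hh.mul ((analyticOnNhd_id).pow n)
    have hdc : DiffContOnCl ℂ φ U := by
      exact ⟨(hφana.differentiableOn).mono hUW, (hφana.differentiableOn.continuousOn).mono hclUW⟩
    have hfront : ∀ w ∈ frontier U, ‖φ w‖ ≤ (0.6:ℝ)^n / ε := by
      intro w hwf
      have hwcl : w ∈ closure U := frontier_subset_closure hwf
      have hwnU : w ∉ U := by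
        rw [frontier, hUopen.interior_eq] at hwf
        exact hwf.2
      obtain ⟨h1, h2⟩ := hclU hwcl
      rw [mem_closedBall, dist_zero_right] at h1
      rw [mem_compl_iff, mem_ball, dist_zero_right, not_lt] at h2
      have hcase : ‖w‖ = 0.6 ∨ ‖w‖ = r := by
        by_contra hcon
        push_neg at hcon
        apply hwnU
        constructor
        · rw [mem_ball, dist_zero_right]; exact lt_of_le_of_ne h1 hcon.2
        · rw [mem_closedBall, dist_zero_right]; push_neg
          exact lt_of_le_of_ne h2 (Ne.symm hcon.1)
      have hwW : w ∈ W := hclUW hwcl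
      have hb := hbound w hwW
      rw [hφ]
      simp only [norm_mul, norm_pow]
      rcases hcase with hc | hc
      · rw [hc]
        have : ‖(g w)⁻¹‖ ≤ (1 - (0.6:ℝ)^2)/ε := by rw [← hc]; exact hb
        calc ‖(g w)⁻¹‖ * (0.6:ℝ)^n ≤ ((1 - (0.6:ℝ)^2)/ε) * (0.6:ℝ)^n := by
              apply mul_le_mul_of_nonneg_right this (by positivity)
          _ ≤ (0.6:ℝ)^n / ε := by
              rw [div_mul_eq_mul_div, div_le_div_iff₀ hε hε]
              nlinarith [pow_nonneg (by norm_num : (0:ℝ) ≤ 0.6) n]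
      · rw [hc]
        have hble : ‖(g w)⁻¹‖ ≤ m/ε := by
          have : ‖(g w)⁻¹‖ ≤ (1 - ‖w‖^2)/ε := hb
          rw [hc, hrsq] at this
          simpa using this
        calc ‖(g w)⁻¹‖ * r^n ≤ (m/ε) * 1 := by
              apply mul_le_mul hble ?_ (by positivity) (by positivity)
              exact pow_le_one₀ (le_of_lt hrpos) (le_of_lt hrlt1)
          _ = m/ε := mul_one _
          _ ≤ (0.6:ℝ)^n/ε := by
              gcongr
              exact min_le_left _ _
    -- apply max modulus
    have hz1U : ((3/4 : ℝ) : ℂ) ∈ U := by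
      constructor
      · rw [mem_ball, dist_zero_right, Complex.norm_real, Real.norm_eq_abs, abs_of_pos (by norm_num)]
        exact hr34
      · rw [mem_closedBall, dist_zero_right, Complex.norm_real, Real.norm_eq_abs,
          abs_of_pos (by norm_num : (0:ℝ) < 3/4)]
        push_neg; norm_num
    have hzcl : ((3/4 : ℝ) : ℂ) ∈ closure U := subset_closure hz1U
    have hmax := Complex.norm_le_of_forall_mem_frontier_norm_le
      (Bornology.IsBounded.subset (isBounded_ball (x := (0:ℂ)) (r := r)) diff_subset)
      hdc hfront hzcl
    rw [hφ] at hmax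
    simp only [norm_mul, norm_pow] at hmax
    have : ‖((3/4 : ℝ) : ℂ)‖ = (3/4 : ℝ) := by
      rw [Complex.norm_real, Real.norm_eq_abs, abs_of_pos]; norm_num
    rw [this] at hmax
    exact hmax
  -- conclude
  set z1 : ℂ := ((3/4 : ℝ) : ℂ) with hz1
  have hz1W : z1 ∈ W := by
    apply hmemW
    · rw [hz1, Complex.norm_real, Real.norm_eq_abs, abs_of_pos (by norm_num)]; norm_num
    · rw [hz1, Complex.norm_real, Real.norm_eq_abs, abs_of_pos (by norm_num)]; norm_num
  have hgz1 : g z1 ≠ 0 := hgne z1 hz1W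
  have hpos : 0 < ‖(g z1)⁻¹‖ := by
    rw [norm_inv]
    exact inv_pos.2 (norm_pos_iff.2 hgz1)
  -- for all n : ‖(g z1)⁻¹‖ ≤ (0.8)^n / ε
  have key2 : ∀ n : ℕ, ‖(g z1)⁻¹‖ ≤ (0.8:ℝ)^n / ε := by
    intro n
    have h := key n
    have h34 : (0:ℝ) < (3/4:ℝ)^n := by positivity
    rw [← le_div_iff₀ h34] at h
    calc ‖(g z1)⁻¹‖ ≤ (0.6:ℝ)^n / ε / (3/4:ℝ)^n := h
      _ = (0.8:ℝ)^n / ε := by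
          rw [div_div]
          rw [show ε * (3/4:ℝ)^n = (3/4:ℝ)^n * ε from mul_comm _ _, ← div_div]
          congr 1
          rw [div_eq_iff (ne_of_gt h34), ← mul_pow]
          norm_num
  obtain ⟨n, hn⟩ := exists_pow_lt_of_lt_one (mul_pos hε hpos) (by norm_num : (0.8:ℝ) < 1)
  have h1 := key2 n
  have h2 : (0.8:ℝ)^n / ε < ‖(g z1)⁻¹‖ := (div_lt_iff₀ hε).2 (by linarith)
  linarith

lemma exp_convex_aux (a x : ℝ) (ha : 0 < a) (ha1 : a ≤ 1) :
    a * (1 - Real.exp (-x)) ≤ 1 - Real.exp (-(a*x)) := by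
  have h := convexOn_exp.2 (mem_univ (-x)) (mem_univ (0:ℝ)) (le_of_lt ha)
    (by linarith : (0:ℝ) ≤ 1 - a) (by ring)
  simp only [smul_eq_mul, mul_zero, add_zero, Real.exp_zero, mul_one] at h
  have : a * -x = -(a*x) := by ring
  rw [this] at h
  linarith

lemma endgame (a k K CS A r ρ M : ℝ) (ha : 0 < a) (hK : 0 ≤ K) (hCS : 0 ≤ CS)
    (hA : 0 ≤ A) (hAM : A ≤ M) (hCSM : CS ≤ M)
    (hρ0 : 0 ≤ ρ) (hρ1 : ρ < 1) (hr0 : 0 < r) (hr1 : r ≤ 1)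
    (hM : M = if a ≤ 1 then a*K + (a-1)*CS else K)
    (har : a ≤ 1 → a*(1-r) ≤ 1-ρ)
    (har2 : ¬ a ≤ 1 → ρ ≤ r) :
    |1 - (r-ρ)/(1-ρ)| * A + |(r-ρ)/(1-ρ)| * CS ≤ K := by
  have h1ρ : 0 < 1 - ρ := by linarith
  set μ : ℝ := (r-ρ)/(1-ρ) with hμ
  have hμ1 : μ ≤ 1 := by rw [hμ, div_le_one h1ρ]; linarith
  have hl0 : 0 ≤ 1 - μ := by linarith
  rw [abs_of_nonneg hl0]
  split_ifs at hM with hle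
  · -- a ≤ 1
    have hCSK : CS ≤ K := by nlinarith
    have hlam : 1 - μ = (1-r)/(1-ρ) := by
      rw [hμ]; field_simp; ring
    have hla : (1-μ)*a ≤ 1 := by
      rw [hlam, div_mul_eq_mul_div, div_le_one h1ρ]
      have := har hle
      nlinarith
    have hAM' : (1-μ)*A ≤ (1-μ)*M := mul_le_mul_of_nonneg_left hAM hl0
    rcases abs_cases μ with ⟨hab, hsgn⟩ | ⟨hab, hsgn⟩ <;> rw [hab]
    · nlinarith [mul_nonneg (sub_nonneg.2 hCSK) (sub_nonneg.2 hla),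
        mul_nonneg (mul_nonneg hl0 (by linarith : (0:ℝ) ≤ 1 - a)) hCS]
    · nlinarith [mul_nonneg (sub_nonneg.2 hla) (by linarith : (0:ℝ) ≤ K + CS)]
  · -- a > 1
    have hμ0 : 0 ≤ μ := div_nonneg (by linarith [har2 hle]) (le_of_lt h1ρ)
    rw [abs_of_nonneg hμ0]
    nlinarith [mul_le_mul_of_nonneg_left hAM hl0, mul_le_mul_of_nonneg_left hCSM hμ0]

theorem ruscheweyh_disk_bound
    (a b k : ℝ) (ha : 0 < a) (hk0 : 0 ≤ k) (hk1 : k < 1)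
    (c s : ℂ) (hs : s = (a : ℂ) + (b : ℂ) * Complex.I)
    (M : ℝ)
    (hM : M = if a ≤ 1 then a * k * ‖s‖ + (a - 1) * ‖s + c‖
              else k * ‖s‖)
    (f : ℂ → ℂ)
    (hf : AnalyticOnNhd ℂ f (ball 0 1)) (hf0 : f 0 = 0) (hf'0 : deriv f 0 = 1)
    (hf' : ∀ z ∈ ball (0 : ℂ) 1, deriv f z ≠ 0)
    (hfz : ∀ z ∈ ball (0 : ℂ) 1 \ {0}, f z ≠ 0)
    (H : ℂ → ℂ)
    (hH : H = fun z => s * (1 + z * deriv (deriv f) z / deriv f z)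
            + (1 - s) * (z * deriv f z / f z))
    (P : ℂ → ℝ → ℂ)
    (hP : P = fun z t => c / (a : ℂ) * (Real.exp (-2 * t) : ℂ) + 1
            + ((Real.exp (-2 * t) : ℂ) - 1) * H z)
    (hineq : ∀ z ∈ ball (0 : ℂ) 1 \ {0},
      ‖c * (‖z‖ : ℂ) ^ 2 + s
        - (a : ℂ) * (1 - (‖z‖ : ℂ) ^ 2) * H z‖ ≤ M) :
    ∀ z ∈ ball (0 : ℂ) 1 \ {0}, ∀ t : ℝ, 0 ≤ t →
      ‖(a : ℂ) *
          P (Complex.exp (-s * (t : ℂ) / (‖s‖ : ℂ)) * z) (t / ‖s‖)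
        + Complex.I * (b : ℂ)‖ ≤ k * ‖s‖ := by
  have hsre : s.re = a := by rw [hs]; simp
  have hs0 : s ≠ 0 := fun h => by rw [h] at hsre; simp at hsre; linarith
  have ha' : (a:ℂ) ≠ 0 := by exact_mod_cast ne_of_gt ha
  set σ : ℝ := ‖s‖ with hσdef
  have hσ : 0 < σ := by
    rw [hσdef]; exact norm_pos_iff.2 hs0
  -- the annulus
  set W : Set ℂ := ball (0:ℂ) 1 \ closedBall 0 (1/2) with hWdef
  have Wsub' : W ⊆ ball (0:ℂ) 1 := diff_subset
  have Wsub : W ⊆ ball (0:ℂ) 1 \ {0} := by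
    intro w hw
    refine ⟨hw.1, ?_⟩
    intro h0
    apply hw.2
    rw [h0, mem_closedBall, dist_self]
    norm_num
  -- analyticity of H on W
  have hfd : AnalyticOnNhd ℂ (deriv f) (ball (0:ℂ) 1) := hf.deriv
  have hfdd : AnalyticOnNhd ℂ (deriv (deriv f)) (ball (0:ℂ) 1) := hfd.deriv
  have hHa : AnalyticOnNhd ℂ H W := by
    rw [hH]
    apply AnalyticOnNhd.add
    · apply AnalyticOnNhd.mul analyticOnNhd_const
      apply AnalyticOnNhd.add analyticOnNhd_const
      exact (analyticOnNhd_id.mul (hfdd.mono Wsub')).div (hfd.mono Wsub')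
        (fun z hz => hf' z (Wsub' hz))
    · exact AnalyticOnNhd.mul analyticOnNhd_const
        ((analyticOnNhd_id.mul (hfd.mono Wsub')).div (hf.mono Wsub')
          (fun z hz => hfz z (Wsub hz)))
  have hga : AnalyticOnNhd ℂ (fun w => c + (a:ℂ) * H w) W :=
    analyticOnNhd_const.add (analyticOnNhd_const.mul hHa)
  -- key fact : |c + s| ≤ M
  have hCsM : ‖c + s‖ ≤ M := by
    refine le_of_forall_pos_le_add fun ε hε => ?_
    have hex : ∃ w ∈ W, (1 - ‖w‖^2) * ‖c + (a:ℂ) * H w‖ < ε := by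
      by_contra hcon
      push_neg at hcon
      exact annulus_liminf _ hga ε hε hcon
    obtain ⟨w, hwW, hwlt⟩ := hex
    have hw1 : ‖w‖ < 1 := by
      have := (Wsub hwW).1
      rwa [mem_ball, dist_zero_right] at this
    have hid : c + s = (c * ((‖w‖ : ℂ))^2 + s
        - (a:ℂ) * (1 - ((‖w‖:ℂ))^2) * H w)
        + ((1:ℂ) - ((‖w‖:ℂ))^2) * (c + (a:ℂ) * H w) := by ring
    have hY : ‖((1:ℂ) - ((‖w‖:ℂ))^2) * (c + (a:ℂ) * H w)‖ ≤ ε := by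
      rw [norm_mul]
      have h1 : ((1:ℂ) - ((‖w‖:ℂ))^2) = (((1 - (‖w‖)^2 : ℝ)):ℂ) := by
        push_cast; ring
      rw [h1, Complex.norm_real, Real.norm_eq_abs, abs_of_nonneg (by nlinarith [norm_nonneg w])]
      have h2 : ‖c + (a:ℂ) * H w‖ = ‖c + (a:ℂ) * H w‖ :=
        rfl
      rw [h2]
      exact le_of_lt hwlt
    calc ‖c + s‖
        ≤ ‖c * ((‖w‖ : ℂ))^2 + s
            - (a:ℂ) * (1 - ((‖w‖:ℂ))^2) * H w‖
          + ‖((1:ℂ) - ((‖w‖:ℂ))^2) * (c + (a:ℂ) * H w)‖ := by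
          rw [hid]; exact norm_add_le _ _
      _ ≤ M + ε := add_le_add (hineq w (Wsub hwW)) hY
  -- main part
  intro z hz t ht
  have hz1 : ‖z‖ < 1 := by
    have := hz.1; rwa [mem_ball, dist_zero_right] at this
  have hz0 : z ≠ 0 := by
    have := hz.2; simpa using this
  set τ : ℝ := t / σ with hτdef
  have hτ : 0 ≤ τ := div_nonneg ht (le_of_lt hσ)
  set w : ℂ := Complex.exp (-s * (t:ℂ) / (σ:ℂ)) * z with hwdef
  set E : ℝ := Real.exp (-(a*τ)) with hEdef
  have habsw : ‖w‖ = E * ‖z‖ := by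
    rw [hwdef, norm_mul, Complex.norm_exp]
    congr 2
    have harg : -s * (t:ℂ) / (σ:ℂ) = ((τ : ℝ) : ℂ) * (-s) := by
      rw [hτdef]; push_cast; ring
    rw [harg, Complex.re_ofReal_mul, Complex.neg_re, hsre]
    ring
  have hE1 : E ≤ 1 := by
    rw [hEdef, ← Real.exp_zero]
    exact Real.exp_le_exp.2 (by nlinarith)
  have hE0 : 0 < E := Real.exp_pos _
  have habsw1 : ‖w‖ < 1 := by
    rw [habsw]
    calc E * ‖z‖ ≤ 1 * ‖z‖ := by
          apply mul_le_mul_of_nonneg_right hE1 (norm_nonneg z)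
      _ < 1 := by rwa [one_mul]
  have hw0 : w ≠ 0 := mul_ne_zero (Complex.exp_ne_zero _) hz0
  have hwmem : w ∈ ball (0:ℂ) 1 \ {0} := by
    constructor
    · rw [mem_ball, dist_zero_right]; exact habsw1
    · simpa using hw0
  set r : ℝ := Real.exp (-2 * τ) with hrdef
  have hr0 : 0 < r := Real.exp_pos _
  have hr1 : r ≤ 1 := by
    rw [hrdef, ← Real.exp_zero]
    exact Real.exp_le_exp.2 (by nlinarith)
  set ρ : ℝ := (‖w‖)^2 with hρdef
  have hρ0 : 0 ≤ ρ := sq_nonneg _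
  have hρ1 : ρ < 1 := by
    rw [hρdef]
    nlinarith [norm_nonneg w]
  have hE2 : E^2 = Real.exp (-(a*(2*τ))) := by
    rw [hEdef, sq, ← Real.exp_add]
    congr 1; ring
  have hρE : ρ ≤ E^2 := by
    rw [hρdef, habsw]
    have h1 : (‖z‖)^2 ≤ 1 := by nlinarith [norm_nonneg z]
    nlinarith [mul_pos hE0 hE0]
  have har : a ≤ 1 → a*(1-r) ≤ 1-ρ := by
    intro h1
    have hcv := exp_convex_aux a (2*τ) ha h1
    have hrr : r = Real.exp (-(2*τ)) := by rw [hrdef]; congr 1; ring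
    rw [hrr]
    rw [← hE2] at hcv
    linarith
  have har2 : ¬ a ≤ 1 → ρ ≤ r := by
    intro h1
    push_neg at h1
    have hEr : E^2 ≤ r := by
      rw [hE2, hrdef]
      exact Real.exp_le_exp.2 (by nlinarith)
    linarith
  -- identity for a * P w τ + I b
  rw [hP]
  simp only
  have hPid : (a:ℂ) * (c/(a:ℂ) * ((Real.exp (-2 * τ) : ℝ):ℂ) + 1
        + (((Real.exp (-2 * τ) : ℝ):ℂ) - 1) * H w) + Complex.I * (b:ℂ)
      = c*((r:ℝ):ℂ) + s - (a:ℂ)*(1-((r:ℝ):ℂ))*H w := by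
    rw [hs, ← hrdef]
    field_simp
    ring
  rw [hPid]
  -- convex combination
  set μ : ℝ := (r-ρ)/(1-ρ) with hμdef
  have h1ρ : 0 < 1 - ρ := by linarith
  have hμc : ((μ:ℝ):ℂ) * (1 - ((ρ:ℝ):ℂ)) = ((r:ℝ):ℂ) - ((ρ:ℝ):ℂ) := by
    rw [hμdef]
    push_cast
    rw [div_mul_cancel₀]
    intro hcon
    have : (1:ℝ) - ρ = 0 := by exact_mod_cast hcon
    linarith
  have hcomb : c*((r:ℝ):ℂ) + s - (a:ℂ)*(1-((r:ℝ):ℂ))*H w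
      = ((1:ℂ)-((μ:ℝ):ℂ)) * (c*((ρ:ℝ):ℂ) + s - (a:ℂ)*(1-((ρ:ℝ):ℂ))*H w)
        + ((μ:ℝ):ℂ)*(c+s) := by
    linear_combination (-c - (a:ℂ) * H w) * hμc
  rw [hcomb]
  have hFρ : ‖c*((ρ:ℝ):ℂ) + s - (a:ℂ)*(1-((ρ:ℝ):ℂ))*H w‖ ≤ M := by
    have := hineq w hwmem
    have hcast : ((ρ:ℝ):ℂ) = ((‖w‖ : ℂ))^2 := by
      rw [hρdef]; push_cast; ring
    rw [hcast]
    exact this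
  calc ‖((1:ℂ)-((μ:ℝ):ℂ)) * (c*((ρ:ℝ):ℂ) + s - (a:ℂ)*(1-((ρ:ℝ):ℂ))*H w)
        + ((μ:ℝ):ℂ)*(c+s)‖
      ≤ ‖((1:ℂ)-((μ:ℝ):ℂ)) * (c*((ρ:ℝ):ℂ) + s - (a:ℂ)*(1-((ρ:ℝ):ℂ))*H w)‖
        + ‖((μ:ℝ):ℂ)*(c+s)‖ := norm_add_le _ _
    _ = |1-μ| * ‖c*((ρ:ℝ):ℂ) + s - (a:ℂ)*(1-((ρ:ℝ):ℂ))*H w‖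
        + |μ| * ‖c+s‖ := by
        rw [norm_mul, norm_mul]
        congr 2
        · rw [show ((1:ℂ)-((μ:ℝ):ℂ)) = (((1-μ:ℝ)):ℂ) by push_cast; ring,
            Complex.norm_real, Real.norm_eq_abs]
        · rw [Complex.norm_real, Real.norm_eq_abs]
    _ ≤ k * σ := by
        rw [hμdef]
        apply endgame a k (k*σ) (‖c+s‖)
          (‖c*((ρ:ℝ):ℂ) + s - (a:ℂ)*(1-((ρ:ℝ):ℂ))*H w‖) r ρ M ha
          (mul_nonneg hk0 (le_of_lt hσ)) (norm_nonneg _) (norm_nonneg _)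
          hFρ hCsM hρ0 hρ1 hr0 hr1 ?_ har har2
        rw [hM]
        split_ifs
        · rw [show s + c = c + s from add_comm s c]
          ring
        · rfl
end

section
/- Let s = a + ib with a > 0 and b real, let k ∈ [0,1), and let c be a complex constant, with M = a·k·|s| + (a−1)·|s+c| if 0 < a ≤ 1 and M = k·|s| if a > 1. Let f ∈ 𝒜 with f'(z) ≠ 0 for all z in 𝔻 and f(z) ≠ 0 for all z ∈ 𝔻 \ {0}, and assume |c|z|² + s − a(1−|z|²)·[s(1 + z f''(z)/f'(z)) + (1−s)·z f'(z)/f(z)]| ≤ M for all z ∈ 𝔻 \ {0}. Then for every r ∈ (0,1), the function f_r defined by f_r(z) = f(rz)/r belongs to 𝒜 and satisfies the same inequality: |c|z|² + s − a(1−|z|²)·[s(1 + z f_r''(z)/f_r'(z)) + (1−s)·z f_r'(z)/f_r(z)]| ≤ M for all z ∈ 𝔻 \ {0}. -/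
open Metric Set

theorem ruscheweyh_dilation_stability
    (a b k : ℝ) (ha : 0 < a) (hk0 : 0 ≤ k) (hk1 : k < 1)
    (c s : ℂ) (hs : s = (a : ℂ) + (b : ℂ) * Complex.I)
    (M : ℝ)
    (hM : M = if a ≤ 1 then a * k * ‖s‖ + (a - 1) * ‖s + c‖
              else k * ‖s‖)
    (f : ℂ → ℂ)
    (hf : AnalyticOnNhd ℂ f (ball 0 1)) (hf0 : f 0 = 0) (hf'0 : deriv f 0 = 1)
    (hf' : ∀ z ∈ ball (0 : ℂ) 1, deriv f z ≠ 0)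
    (hfz : ∀ z ∈ ball (0 : ℂ) 1 \ {0}, f z ≠ 0)
    (hineq : ∀ z ∈ ball (0 : ℂ) 1 \ {0},
      ‖(c * ((‖z‖ : ℝ) : ℂ) ^ 2 + s
        - (a : ℂ) * (1 - ((‖z‖ : ℝ) : ℂ) ^ 2) *
          (s * (1 + z * deriv (deriv f) z / deriv f z)
            + (1 - s) * (z * deriv f z / f z)))‖ ≤ M)
    (r : ℝ) (hr0 : 0 < r) (hr1 : r < 1)
    (fr : ℂ → ℂ) (hfr : fr = fun z => f ((r : ℂ) * z) / (r : ℂ)) :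
    (AnalyticOnNhd ℂ fr (ball 0 1) ∧ fr 0 = 0 ∧ deriv fr 0 = 1) ∧
    ∀ z ∈ ball (0 : ℂ) 1 \ {0},
      ‖(c * ((‖z‖ : ℝ) : ℂ) ^ 2 + s
        - (a : ℂ) * (1 - ((‖z‖ : ℝ) : ℂ) ^ 2) *
          (s * (1 + z * deriv (deriv fr) z / deriv fr z)
            + (1 - s) * (z * deriv fr z / fr z)))‖ ≤ M := by
  have hrC : (r : ℂ) ≠ 0 := by
    exact_mod_cast (Complex.ofReal_ne_zero).2 hr0.ne'
  have hball : ∀ z : ℂ, z ∈ ball (0 : ℂ) 1 → (r : ℂ) * z ∈ ball (0 : ℂ) 1 := by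
    intro z hz
    simp only [mem_ball, dist_zero_right] at hz ⊢
    rw [norm_mul, Complex.norm_real, Real.norm_of_nonneg hr0.le]
    nlinarith [norm_nonneg z]
  -- first derivative of fr
  have hfrd : ∀ z ∈ ball (0 : ℂ) 1, HasDerivAt fr (deriv f ((r : ℂ) * z)) z := by
    intro z hz
    have h1 : HasDerivAt f (deriv f ((r : ℂ) * z)) ((r : ℂ) * z) :=
      ((hf _ (hball z hz)).differentiableAt).hasDerivAt
    have h2 : HasDerivAt (fun w : ℂ => (r : ℂ) * w) (r : ℂ) z := by
      simpa using (hasDerivAt_id z).const_mul (r : ℂ)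
    have h3 := (h1.comp z h2).div_const (r : ℂ)
    rw [hfr]
    rw [mul_div_cancel_right₀ _ hrC] at h3
    exact h3
  have hfrderiv : ∀ z ∈ ball (0 : ℂ) 1, deriv fr z = deriv f ((r : ℂ) * z) :=
    fun z hz => (hfrd z hz).deriv
  -- second derivative of fr
  have hfrd2 : ∀ z ∈ ball (0 : ℂ) 1,
      deriv (deriv fr) z = (r : ℂ) * deriv (deriv f) ((r : ℂ) * z) := by
    intro z hz
    have hev : deriv fr =ᶠ[nhds z] fun w => deriv f ((r : ℂ) * w) := by
      filter_upwards [isOpen_ball.mem_nhds hz] with w hw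
      exact (hfrd w hw).deriv
    rw [hev.deriv_eq]
    have h1 : HasDerivAt (deriv f) (deriv (deriv f) ((r : ℂ) * z)) ((r : ℂ) * z) :=
      ((hf.deriv _ (hball z hz)).differentiableAt).hasDerivAt
    have h2 : HasDerivAt (fun w : ℂ => (r : ℂ) * w) (r : ℂ) z := by
      simpa using (hasDerivAt_id z).const_mul (r : ℂ)
    have h3 : HasDerivAt (fun w : ℂ => deriv f ((r : ℂ) * w))
        (deriv (deriv f) ((r : ℂ) * z) * (r : ℂ)) z := by
      exact h1.comp z h2
    rw [h3.deriv]; ring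
  -- analyticity of fr
  have hfrA : AnalyticOnNhd ℂ fr (ball 0 1) := by
    rw [hfr]
    intro z hz
    have h1 : AnalyticAt ℂ f ((r : ℂ) * z) := hf _ (hball z hz)
    have h2 : AnalyticAt ℂ (fun w : ℂ => (r : ℂ) * w) z :=
      (analyticAt_const).mul (analyticAt_id)
    exact (h1.comp h2).div analyticAt_const hrC
  have hfr0 : fr 0 = 0 := by rw [hfr]; simp [hf0]
  have hfr'0 : deriv fr 0 = 1 := by
    rw [hfrderiv 0 (by simp), mul_zero, hf'0]
  refine ⟨⟨hfrA, hfr0, hfr'0⟩, ?_⟩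
  -- dslope facts
  have h0mem : (0 : ℂ) ∈ ball (0 : ℂ) 1 := by simp
  have hgd : DifferentiableOn ℂ (dslope f 0) (ball 0 1) :=
    (Complex.differentiableOn_dslope (isOpen_ball.mem_nhds h0mem)).2 hf.differentiableOn
  have hgval : ∀ ζ : ℂ, ζ ≠ 0 → dslope f 0 ζ = f ζ / ζ := by
    intro ζ hζ
    rw [dslope_of_ne f hζ, slope_def_field]
    simp [hf0]
  have hgne : ∀ ζ ∈ ball (0 : ℂ) 1, dslope f 0 ζ ≠ 0 := by
    intro ζ hζ
    rcases eq_or_ne ζ 0 with rfl | hne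
    · simp [dslope_same, hf'0]
    · rw [hgval ζ hne]
      exact div_ne_zero (hfz ζ ⟨hζ, hne⟩) hne
  have d1 : DifferentiableOn ℂ (deriv f) (ball 0 1) := (hf.deriv).differentiableOn
  have d2 : DifferentiableOn ℂ (deriv (deriv f)) (ball 0 1) :=
    (hf.deriv.deriv).differentiableOn
  intro z hz
  obtain ⟨hz1, hz0⟩ := hz
  have hz0' : z ≠ 0 := hz0
  set ρ : ℝ := ‖z‖ with hρ
  have hρ0 : 0 < ρ := norm_pos_iff.mpr hz0'
  have hρ1 : ρ < 1 := by
    simpa [Complex.dist_eq] using hz1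
  set G : ℂ → ℂ := fun ζ => c * (ρ : ℂ) ^ 2 + s - (a : ℂ) * (1 - (ρ : ℂ) ^ 2) *
      (s * (1 + ζ * deriv (deriv f) ζ / deriv f ζ)
        + (1 - s) * (deriv f ζ / dslope f 0 ζ)) with hG
  have hGd : DifferentiableOn ℂ G (ball 0 1) := by
    apply DifferentiableOn.sub (differentiableOn_const _)
    apply DifferentiableOn.mul (differentiableOn_const _)
    apply DifferentiableOn.add
    · apply DifferentiableOn.mul (differentiableOn_const _)
      apply DifferentiableOn.add (differentiableOn_const _)
      exact (differentiableOn_id.mul d2).div d1 hf'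
    · exact (differentiableOn_const _).mul (d1.div hgd hgne)
  have hwcl : (r : ℂ) * z ∈ closure (ball (0 : ℂ) ρ) := by
    rw [closure_ball _ hρ0.ne']
    simp only [mem_closedBall, dist_zero_right, norm_mul, Complex.norm_real,
      Real.norm_of_nonneg hr0.le]
    calc r * ‖z‖ ≤ 1 * ‖z‖ := by
          apply mul_le_mul_of_nonneg_right hr1.le (norm_nonneg z)
      _ = ρ := by rw [one_mul]
  have hDCC : DiffContOnCl ℂ G (ball 0 ρ) := by
    refine ⟨hGd.mono (ball_subset_ball hρ1.le), ?_⟩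
    rw [closure_ball _ hρ0.ne']
    exact hGd.continuousOn.mono (closedBall_subset_ball hρ1)
  have hfront : ∀ ζ ∈ frontier (ball (0 : ℂ) ρ), ‖G ζ‖ ≤ M := by
    intro ζ hζ
    rw [frontier_ball _ hρ0.ne'] at hζ
    have hζρ : ‖ζ‖ = ρ := by
      simpa [Complex.dist_eq] using hζ
    have hζ0 : ζ ≠ 0 := by
      intro h; rw [h] at hζρ; simp at hζρ; exact hρ0.ne' hζρ.symm
    have hζ1 : ζ ∈ ball (0 : ℂ) 1 := by
      simp only [mem_ball, dist_zero_right]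
      rw [show ‖ζ‖ = ‖ζ‖ from rfl, hζρ]; exact hρ1
    have hfζ : f ζ ≠ 0 := hfz ζ ⟨hζ1, hζ0⟩
    have := hineq ζ ⟨hζ1, hζ0⟩
    have hGe : G ζ = c * ((‖ζ‖ : ℝ) : ℂ) ^ 2 + s
        - (a : ℂ) * (1 - ((‖ζ‖ : ℝ) : ℂ) ^ 2) *
          (s * (1 + ζ * deriv (deriv f) ζ / deriv f ζ)
            + (1 - s) * (ζ * deriv f ζ / f ζ)) := by
      simp only [hG]
      rw [hgval ζ hζ0, hζρ]
      have hd : deriv f ζ ≠ 0 := hf' ζ hζ1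
      field_simp
    rw [hGe]
    exact this
  have hmax : ‖G ((r : ℂ) * z)‖ ≤ M :=
    Complex.norm_le_of_forall_mem_frontier_norm_le isBounded_ball hDCC hfront hwcl
  -- rewrite the goal in terms of G (r z)
  have hw1 : (r : ℂ) * z ∈ ball (0 : ℂ) 1 := hball z hz1
  have hw0 : (r : ℂ) * z ≠ 0 := mul_ne_zero hrC hz0'
  have hfw : f ((r : ℂ) * z) ≠ 0 := hfz _ ⟨hw1, hw0⟩
  have e1 : deriv fr z = deriv f ((r : ℂ) * z) := hfrderiv z hz1
  have e2 : deriv (deriv fr) z = (r : ℂ) * deriv (deriv f) ((r : ℂ) * z) := hfrd2 z hz1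
  have e3 : fr z = f ((r : ℂ) * z) / (r : ℂ) := by rw [hfr]
  have hdw : deriv f ((r : ℂ) * z) ≠ 0 := hf' _ hw1
  have hGoal : c * (ρ : ℂ) ^ 2 + s
      - (a : ℂ) * (1 - (ρ : ℂ) ^ 2) *
        (s * (1 + z * deriv (deriv fr) z / deriv fr z)
          + (1 - s) * (z * deriv fr z / fr z)) = G ((r : ℂ) * z) := by
    rw [e1, e2, e3]
    simp only [hG]
    rw [hgval _ hw0]
    field_simp
  rw [hGoal]
  exact hmax
end

section
/- Let a > 0, b ∈ ℝ, s = a + ib, and k ∈ [0,1). Set l = (2ka + (1−k²)|b|) / ((1+k²)a + (1−k²)|s|) and D = (1+l²)a + (1−l²)|s|. Then for every complex number w with |a·w + i·b| ≤ k·|s|, one has |w + i·(1+l²)·b / D| ≤ 2·l·|s| / D. Equivalently, the closed disk {w : |a w + i b| ≤ k|s|} is contained in the closed disk of center −i(1+l²)b/D and radius 2l|s|/D. -/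
theorem disk_inclusion
    (a b k : ℝ) (ha : 0 < a) (hk0 : 0 ≤ k) (hk1 : k < 1)
    (s : ℂ) (hs : s = (a : ℂ) + (b : ℂ) * Complex.I)
    (l D : ℝ)
    (hl : l = (2 * k * a + (1 - k ^ 2) * |b|) /
              ((1 + k ^ 2) * a + (1 - k ^ 2) * ‖s‖))
    (hD : D = (1 + l ^ 2) * a + (1 - l ^ 2) * ‖s‖)
    (w : ℂ)
    (hw : ‖(a : ℂ) * w + Complex.I * (b : ℂ)‖ ≤ k * ‖s‖) :
    ‖w + Complex.I * (((1 + l ^ 2) * b / D : ℝ) : ℂ)‖ ≤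
      2 * l * ‖s‖ / D := by
  set r := ‖s‖ with hr
  have hrnn : 0 ≤ r := norm_nonneg s
  have hr2 : r ^ 2 = a ^ 2 + b ^ 2 := by
    rw [hr, Complex.sq_norm, Complex.normSq_apply, hs]
    simp
    ring
  have hrpos : 0 < r := by nlinarith [sq_nonneg b]
  have hbr : |b| ≤ r := by nlinarith [abs_nonneg b, sq_abs b]
  have har : a ≤ r := by nlinarith
  have hk2 : 0 < 1 - k ^ 2 := by nlinarith
  have hE : 0 < (1 + k ^ 2) * a + (1 - k ^ 2) * r := by nlinarith
  have hlE : l * ((1 + k ^ 2) * a + (1 - k ^ 2) * r) = 2 * k * a + (1 - k ^ 2) * |b| := by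
    rw [hl]; field_simp
  have hl0 : 0 ≤ l := by
    rw [hl]
    apply div_nonneg _ hE.le
    have := abs_nonneg b
    nlinarith
  have hl1 : l ≤ 1 := by nlinarith [sq_nonneg (1 - k)]
  have h1l2 : 0 ≤ 1 - l ^ 2 := by nlinarith
  have hDpos : 0 < D := by rw [hD]; nlinarith [mul_nonneg h1l2 hrnn]
  have hb2 : |b| ^ 2 = b ^ 2 := sq_abs b
  have key : k * D + (1 - l ^ 2) * |b| = 2 * l * a := by
    have h9 : (k * D + (1 - l ^ 2) * |b| - 2 * l * a) *
        ((1 + k ^ 2) * a + (1 - k ^ 2) * r) ^ 2 = 0 := by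
      rw [hD]
      linear_combination
        ((1 - k ^ 2) ^ 2 * (k * r + |b| + k * a) + 2 * k * (1 - k ^ 2) * (1 + k ^ 2) * a) * hr2
        + ((k * a - k * r - |b|) *
            (l * ((1 + k ^ 2) * a + (1 - k ^ 2) * r) + (2 * k * a + (1 - k ^ 2) * |b|))
            - 2 * a * ((1 + k ^ 2) * a + (1 - k ^ 2) * r)) * hlE
        - ((1 - k ^ 2) ^ 2 * (k * r + |b| + k * a) + 2 * k * (1 - k ^ 2) * (1 + k ^ 2) * a) * hb2
    have hE2 : ((1 + k ^ 2) * a + (1 - k ^ 2) * r) ^ 2 ≠ 0 := by positivity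
    have := (mul_eq_zero.mp h9).resolve_right hE2
    linarith
  have hDne : (D : ℝ) ≠ 0 := hDpos.ne'
  have h1 : (a : ℂ) * (w + Complex.I * (((1 + l ^ 2) * b / D : ℝ) : ℂ)) =
      ((a : ℂ) * w + Complex.I * (b : ℂ)) -
        Complex.I * (((1 - l ^ 2) * b * r / D : ℝ) : ℂ) := by
    have hreal : a * ((1 + l ^ 2) * b / D) + (1 - l ^ 2) * b * r / D = b := by
      field_simp
      linear_combination -b * hD
    have hx : (a : ℂ) * (((1 + l ^ 2) * b / D : ℝ) : ℂ) +
        (((1 - l ^ 2) * b * r / D : ℝ) : ℂ) = (b : ℂ) := by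
      exact_mod_cast congrArg (Complex.ofReal) hreal
    linear_combination Complex.I * hx
  have habs2 : ‖Complex.I * (((1 - l ^ 2) * b * r / D : ℝ) : ℂ)‖ =
      (1 - l ^ 2) * |b| * r / D := by
    rw [norm_mul, Complex.norm_I, Complex.norm_real, Real.norm_eq_abs, one_mul, abs_div, abs_mul, abs_mul,
      abs_of_nonneg h1l2, abs_of_nonneg hrnn,
      abs_of_pos hDpos]
  have h2 : a * ‖w + Complex.I * (((1 + l ^ 2) * b / D : ℝ) : ℂ)‖ ≤
      2 * l * r * a / D := by
    have e1 : a * ‖w + Complex.I * (((1 + l ^ 2) * b / D : ℝ) : ℂ)‖ =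
        ‖(a : ℂ) * (w + Complex.I * (((1 + l ^ 2) * b / D : ℝ) : ℂ))‖ := by
      rw [norm_mul, Complex.norm_real, Real.norm_eq_abs, abs_of_pos ha]
    rw [e1, h1]
    calc ‖((a : ℂ) * w + Complex.I * (b : ℂ)) -
            Complex.I * (((1 - l ^ 2) * b * r / D : ℝ) : ℂ)‖
        ≤ ‖(a : ℂ) * w + Complex.I * (b : ℂ)‖ +
            ‖Complex.I * (((1 - l ^ 2) * b * r / D : ℝ) : ℂ)‖ :=
          norm_sub_le _ _
      _ ≤ k * r + (1 - l ^ 2) * |b| * r / D := by rw [habs2]; exact add_le_add_left hw _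
      _ = 2 * l * r * a / D := by field_simp; linear_combination key
  have hfin : 2 * l * r * a / D = a * (2 * l * r / D) := by ring
  rw [hfin] at h2
  exact (mul_le_mul_iff_right₀ ha).mp h2
end

section
/- Let s = a + ib with a > 0 and b real, let l ∈ [0,1), and let P be a complex number. Set D = (1+l²)a + (1−l²)|s|. Then |s(1+P) − |s|(1−P)| ≤ l·|s(1+P) + |s|(1−P)| if and only if |P + i·(1+l²)·b / D| ≤ 2·l·|s| / D. -/
theorem moebius_disk_equivalence
    (a b : ℝ) (ha : 0 < a)
    (s : ℂ) (hs : s = (a : ℂ) + (b : ℂ) * Complex.I)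
    (l : ℝ) (hl0 : 0 ≤ l) (hl1 : l < 1)
    (D : ℝ) (hD : D = (1 + l ^ 2) * a + (1 - l ^ 2) * ‖s‖)
    (P : ℂ) :
    ‖s * (1 + P) - (‖s‖ : ℂ) * (1 - P)‖ ≤
        l * ‖s * (1 + P) + (‖s‖ : ℂ) * (1 - P)‖ ↔
      ‖P + Complex.I * (((1 + l ^ 2) * b / D : ℝ) : ℂ)‖ ≤
        2 * l * ‖s‖ / D := by
  have habs : ∀ z : ℂ, ‖z‖ ^ 2 = z.re ^ 2 + z.im ^ 2 := fun z => by
    rw [Complex.sq_norm, Complex.normSq_apply]; ring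
  set r := ‖s‖ with hrdef
  have hr0 : 0 ≤ r := norm_nonneg s
  have hr2 : r ^ 2 = a ^ 2 + b ^ 2 := by
    rw [hrdef, Complex.sq_norm, hs, Complex.normSq_apply]
    simp
    ring
  have hra : a ≤ r := by nlinarith
  have hrpos : 0 < r := lt_of_lt_of_le ha hra
  have hDpos : 0 < D := by
    rw [hD]
    have h1 : 0 ≤ (1 - l^2) * r := mul_nonneg (by nlinarith) hr0
    have h2 : 0 < (1 + l^2) * a := by positivity
    linarith
  have hDne : D ≠ 0 := ne_of_gt hDpos
  set x := P.re with hx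
  set y := P.im with hy
  set q : ℝ := (1 + l ^ 2) * b / D with hq
  have hA : (‖s * (1 + P) - (r : ℂ) * (1 - P)‖) ^ 2 =
      2*r^2 - 2*r*a + (2*r^2 + 2*r*a)*(x^2 + y^2) + 4*r*b*y := by
    rw [habs, hs]
    simp [Complex.mul_re, Complex.mul_im, hx, hy]
    linear_combination (-((1 + x)^2 + y^2)) * hr2
  have hB : (‖s * (1 + P) + (r : ℂ) * (1 - P)‖) ^ 2 =
      2*r^2 + 2*r*a + (2*r^2 - 2*r*a)*(x^2 + y^2) - 4*r*b*y := by
    rw [habs, hs]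
    simp [Complex.mul_re, Complex.mul_im, hx, hy]
    linear_combination (-((1 + x)^2 + y^2)) * hr2
  have hC : (‖P + Complex.I * (q : ℂ)‖) ^ 2 = x^2 + (y + q)^2 := by
    rw [habs]
    simp [Complex.mul_re, Complex.mul_im, hx, hy]
  set E : ℝ := D*(x^2 + y^2) + 2*(1 + l^2)*b*y + ((r - a) - l^2*(r + a)) with hE
  have hL : ‖s * (1 + P) - (r : ℂ) * (1 - P)‖ ≤
      l * ‖s * (1 + P) + (r : ℂ) * (1 - P)‖ ↔ E ≤ 0 := by
    rw [← pow_le_pow_iff_left₀ (norm_nonneg _)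
      (mul_nonneg hl0 (norm_nonneg _)) two_ne_zero, mul_pow, hA, hB, hE, hD]
    constructor <;> intro h
    · nlinarith [mul_le_mul_of_nonneg_left h hr0]
    · nlinarith [hrpos]
  have hR : ‖P + Complex.I * (q : ℂ)‖ ≤ 2 * l * r / D ↔ E ≤ 0 := by
    rw [← pow_le_pow_iff_left₀ (norm_nonneg _) (by positivity) two_ne_zero, hC]
    rw [← mul_le_mul_iff_of_pos_right (pow_pos hDpos 2)]
    have e1 : (x^2 + (y + q)^2) * D^2 =
        D^2*(x^2 + y^2) + 2*D*(1 + l^2)*b*y + (1 + l^2)^2*b^2 := by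
      rw [hq]; field_simp; ring
    have e2 : (2 * l * r / D)^2 * D^2 = 4*l^2*r^2 := by
      field_simp; ring
    rw [e1, e2]
    have key : D^2*(x^2 + y^2) + 2*D*(1 + l^2)*b*y + (1 + l^2)^2*b^2 - 4*l^2*r^2
        = D * E := by
      rw [hE]
      linear_combination (-(r - a - l^2*(r + a))) * hD + (-(1 + l^2)^2) * hr2
    constructor <;> intro h
    · have h2 : D * E ≤ 0 := by linarith
      by_contra h3
      push_neg at h3
      exact absurd h2 (not_le.mpr (mul_pos hDpos h3))
    · have h2 : D * E ≤ D * 0 := mul_le_mul_of_nonneg_left h hDpos.le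
      rw [mul_zero] at h2
      linarith
  rw [hL, hR]
end

section
/- Let f ∈ 𝒜 with f'(z) ≠ 0 for all z ∈ 𝔻, let c be a complex constant, and let k ∈ [0,1]. If |c·|z|² + (1 − |z|²)·z f''(z)/f'(z)| ≤ k for all z ∈ 𝔻, then |c| ≤ k. -/
open Metric Set

theorem ahlfors_becker_constant_bound
    (f : ℂ → ℂ)
    (hf : AnalyticOnNhd ℂ f (ball 0 1)) (hf0 : f 0 = 0) (hf'0 : deriv f 0 = 1)
    (hf' : ∀ z ∈ ball (0 : ℂ) 1, deriv f z ≠ 0)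
    (c : ℂ) (k : ℝ) (hk0 : 0 ≤ k) (hk1 : k ≤ 1)
    (hineq : ∀ z ∈ ball (0 : ℂ) 1,
      ‖c * (‖z‖ : ℂ) ^ 2
        + (1 - (‖z‖ : ℂ) ^ 2) * (z * deriv (deriv f) z / deriv f z)‖ ≤ k) :
    ‖c‖ ≤ k := by
  -- g is analytic (hence differentiable) on the unit ball
  set g : ℂ → ℂ := fun z => z * deriv (deriv f) z / deriv f z with hg
  have hgdiff : ∀ z ∈ ball (0 : ℂ) 1, DifferentiableAt ℂ g z := by
    intro z hz
    have h1 : AnalyticAt ℂ (deriv f) z := hf.deriv z hz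
    have h2 : AnalyticAt ℂ (deriv (deriv f)) z := (hf.deriv.deriv) z hz
    have h3 : AnalyticAt ℂ (fun z => z * deriv (deriv f) z) z :=
      (analyticAt_id).mul h2
    exact (h3.div h1 (hf' z hz)).differentiableAt
  -- key estimate for each radius r ∈ (0,1)
  have key : ∀ r : ℝ, r ∈ Ioo (0 : ℝ) 1 → ‖c‖ * r ^ 2 ≤ k := by
    intro r ⟨hr0, hr1⟩
    set h : ℂ → ℂ := fun z => c * (r : ℂ) ^ 2 + (1 - (r : ℂ) ^ 2) * g z with hh
    have hsub : closedBall (0 : ℂ) r ⊆ ball 0 1 := by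
      intro z hz
      simp only [mem_closedBall, mem_ball] at hz ⊢
      linarith
    have hdiff : DiffContOnCl ℂ h (ball 0 r) := by
      have hd : DifferentiableOn ℂ h (closedBall (0 : ℂ) r) := by
        intro z hz
        exact ((differentiableAt_const _).add
          ((differentiableAt_const _).mul (hgdiff z (hsub hz)))).differentiableWithinAt
      exact DiffContOnCl.mk (hd.mono ball_subset_closedBall)
        (hd.continuousOn.mono (by rw [closure_ball _ (ne_of_gt hr0)]))
    have hbound : ∀ z ∈ frontier (ball (0 : ℂ) r), ‖h z‖ ≤ k := by
      intro z hz
      rw [frontier_ball _ (ne_of_gt hr0)] at hz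
      have habs : ‖z‖ = r := by
        simpa using hz
      have hz1 : z ∈ ball (0 : ℂ) 1 := by
        simp only [mem_ball, dist_zero_right, habs]
        exact hr1
      have := hineq z hz1
      rw [habs] at this
      simpa [hh] using this
    have h0 : ‖h 0‖ ≤ k := by
      apply Complex.norm_le_of_forall_mem_frontier_norm_le isBounded_ball hdiff hbound
      rw [closure_ball _ (ne_of_gt hr0)]
      exact mem_closedBall_self (le_of_lt hr0)
    have hg0 : g 0 = 0 := by simp [hg]
    have : ‖h 0‖ = ‖c‖ * r ^ 2 := by
      simp [hh, hg0, map_mul, map_pow,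
        abs_of_pos hr0]
    linarith [h0, this.symm.le.trans h0]
  -- let r → 1⁻
  have htend : Filter.Tendsto (fun r : ℝ => ‖c‖ * r ^ 2)
      (nhdsWithin 1 (Iio 1)) (nhds (‖c‖)) := by
    have : Filter.Tendsto (fun r : ℝ => ‖c‖ * r ^ 2)
        (nhds 1) (nhds (‖c‖ * 1 ^ 2)) := by
      exact (Filter.Tendsto.mul tendsto_const_nhds ((continuous_pow 2).tendsto 1))
    simpa using this.mono_left nhdsWithin_le_nhds
  refine le_of_tendsto htend ?_
  filter_upwards [Ioo_mem_nhdsLT_of_mem (by norm_num : (1:ℝ) ∈ Ioc (0:ℝ) 1)] with r hr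
  exact key r hr
end
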